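/- arXiv:1409.6977 — 7 statements merged into one kernel-verified Lean document; each statement's English description precedes it below -/
import Mathlib

section
/- There is no oracle Turing machine M such that for every computable binary sequence x and every natural number k ≥ K(x) (where K(x) is the length of a shortest program computing x), M with oracle the sequence 0^k 1 x halts and outputs an index e with φ_e computing x. (That is, one cannot uniformly compute a Markov-name of x from a Type-2 name of x together with an upper bound on its Kolmogorov complexity.) -/
/-- The standard enumeration of partial computable functions. -/
noncomputable def phi (e : ℕ) : ℕ →. ℕ := (Denumerable.ofNat Nat.Partrec.Code e).eval

/-- The e-th computably enumerable set. -/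
def W (e : ℕ) : Set ℕ := (phi e).Dom

/-- `e` is a program (Markov-name) for the binary sequence `x`. -/
def computesSeq (e : ℕ) (x : ℕ → Bool) : Prop :=
  ∀ n, phi e n = Part.some (cond (x n) 1 0)

/-- Kolmogorov complexity of a computable binary sequence: least binary length of a program. -/
noncomputable def Kseq (x : ℕ → Bool) : ℕ := sInf (Nat.size '' {e | computesSeq e x})

/-- The finite prefix of length `m` of the oracle `f`. -/
def pref (f : ℕ → ℕ) (m : ℕ) : List ℕ := (List.range m).map f

/-- The finite prefix of length `m` of a boolean oracle. -/
def prefB (f : ℕ → Bool) (m : ℕ) : List Bool := (List.range m).map f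

/-- The oracle sequence `0^k 1 x`. -/
def oracleSeq (k : ℕ) (x : ℕ → Bool) : ℕ → ℕ :=
  fun i => if i < k then 0 else if i = k then 1 else cond (x (i - k - 1)) 1 0

/- ---------- auxiliary material ---------- -/

theorem pref_prefix {a b : ℕ} (ff : ℕ → ℕ) (h : a ≤ b) : pref ff a <+: pref ff b := by
  have : List.range a <+: List.range b := by
    have := List.take_prefix a (List.range b)
    rwa [List.take_range, Nat.min_eq_left h] at this
  exact this.map ff

theorem pref_congr {m : ℕ} {f g : ℕ → ℕ} (h : ∀ i < m, f i = g i) : pref f m = pref g m :=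
  List.map_congr_left fun i hi => h i (List.mem_range.mp hi)

/-- The length-`m` prefix of the oracle `0^k 1 0^ω`, as an explicitly primitive
recursive function of `k` and `m`. -/
def zlist (k m : ℕ) : List ℕ :=
  (List.range m).map (fun i => if i < k then 0 else if i = k then 1 else 0)

theorem zlist_primrec : Primrec₂ zlist := by
  have hinner : Primrec₂ (fun (p : ℕ × ℕ) (i : ℕ) =>
      if i < p.1 then 0 else if i = p.1 then (1 : ℕ) else 0) := by
    refine Primrec.ite ?_ (Primrec.const 0) (Primrec.ite ?_ (Primrec.const 1) (Primrec.const 0))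
    · exact Primrec.nat_lt.comp Primrec.snd (Primrec.fst.comp Primrec.fst)
    · exact Primrec.eq.comp Primrec.snd (Primrec.fst.comp Primrec.fst)
  exact Primrec.list_map (Primrec.list_range.comp Primrec.snd) hinner

theorem zlist_eq_pref (k m : ℕ) :
    zlist k m = pref (oracleSeq k (fun _ => false)) m := rfl

open Nat.Partrec (Code)

/-- There is no oracle Turing machine (modelled as a computable monotone map on finite
oracle prefixes) which, with oracle `0^k 1 x` for any computable binary sequence `x` and any
`k ≥ K(x)`, halts and outputs an index `e` with `φ_e` computing `x`. -/
theorem stmt0 :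
    ¬ ∃ M : List ℕ → Option ℕ, Computable M ∧
      (∀ l l' y, M l = some y → M (l ++ l') = some y) ∧
      ∀ x : ℕ → Bool, Computable x → ∀ k, Kseq x ≤ k →
        ∃ m e, M (pref (oracleSeq k x) m) = some e ∧ computesSeq e x := by
  rintro ⟨M, hMcomp, hMmono, hM⟩
  classical
  have mono : ∀ {l l' : List ℕ} {y}, M l = some y → l <+: l' → M l' = some y := by
    rintro l l' y h ⟨r, rfl⟩; exact hMmono l r y h
  set z : ℕ → Bool := fun _ => false with hzdef
  have hz0 : computesSeq 0 z := by
    intro n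
    have h0 : (Denumerable.ofNat Nat.Partrec.Code 0) = Nat.Partrec.Code.zero := by
      have h : Encodable.encode Nat.Partrec.Code.zero = 0 := rfl
      rw [← h, Denumerable.ofNat_encode]
    show (Denumerable.ofNat Nat.Partrec.Code 0).eval n = _
    rw [h0]
    rfl
  have hKz : Kseq z = 0 :=
    Nat.le_zero.mp (Nat.sInf_le ⟨0, hz0, Nat.size_zero⟩)
  -- the self-referential program
  let F : Code → ℕ →. ℕ := fun c n =>
    (Nat.rfind (fun m =>
      Part.some ((M (zlist (Encodable.encode c) m)).isSome))).map
      (fun t => if n < t then 0 else 1)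
  have hF : Partrec₂ F := by
    have hlist : Computable (fun q : (Code × ℕ) × ℕ =>
        zlist (Encodable.encode q.1.1) q.2) :=
      zlist_primrec.to_comp.comp
        (Computable.encode.comp (Computable.fst.comp Computable.fst)) Computable.snd
    have hpred : Computable (fun q : (Code × ℕ) × ℕ =>
        (M (zlist (Encodable.encode q.1.1) q.2)).isSome) :=
      Primrec.option_isSome.to_comp.comp (hMcomp.comp hlist)
    have hp2 : Partrec₂ (fun (a : Code × ℕ) (m : ℕ) =>
        (Part.some ((M (zlist (Encodable.encode a.1) m)).isSome) : Part Bool)) :=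
      (hpred.to₂).partrec₂
    have hrf : Partrec (fun a : Code × ℕ =>
        Nat.rfind (fun m => Part.some ((M (zlist (Encodable.encode a.1) m)).isSome))) :=
      Partrec.rfind hp2
    have hmap : Partrec (fun a : Code × ℕ =>
        (Nat.rfind (fun m =>
          Part.some ((M (zlist (Encodable.encode a.1) m)).isSome))).map
          (fun t => if a.2 < t then 0 else 1)) := by
      refine hrf.map ?_
      have : Primrec₂ (fun (a : Code × ℕ) (t : ℕ) => if a.2 < t then (0:ℕ) else 1) :=
        Primrec.ite (Primrec.nat_lt.comp (Primrec.snd.comp Primrec.fst) Primrec.snd)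
          (Primrec.const 0) (Primrec.const 1)
      exact this.to_comp
    exact hmap.to₂
  obtain ⟨c, hc⟩ := Nat.Partrec.Code.fixed_point₂ hF
  set k : ℕ := Encodable.encode c with hk
  -- M halts on the all-zero oracle 0^k 1 0^ω
  obtain ⟨m0, e0, hm0, he0⟩ := hM z (Computable.const false) k (by simp [hKz])
  let q : ℕ →. Bool := fun m => Part.some ((M (zlist k m)).isSome)
  have hq0 : (M (zlist k m0)).isSome := by
    rw [zlist_eq_pref, ← hzdef, hm0]; rfl
  have hdom : (Nat.rfind q).Dom :=
    Nat.rfind_dom.mpr ⟨m0, by simpa [q] using hq0, fun {_} _ => trivial⟩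
  let t : ℕ := (Nat.rfind q).get hdom
  have ht : t ∈ Nat.rfind q := Part.get_mem hdom
  have htsome : (M (zlist k t)).isSome := by
    have := Nat.rfind_spec ht
    simpa [q] using this
  obtain ⟨e, he⟩ := Option.isSome_iff_exists.mp htsome
  have htmin : t ≤ m0 := by
    by_contra h
    have := Nat.rfind_min ht (Nat.lt_of_not_le h)
    rw [Part.mem_some_iff] at this
    rw [← this] at hq0
    exact Bool.false_ne_true (by simpa using hq0)
  -- e is M's answer at stage m0 too, hence e = e0 and e computes z
  have hee0 : e = e0 := by
    have h1 : M (zlist k m0) = some e :=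
      mono he ((zlist_eq_pref k t) ▸ (zlist_eq_pref k m0) ▸ pref_prefix _ htmin)
    rw [zlist_eq_pref, ← hzdef, hm0] at h1
    exact (Option.some_inj.mp h1).symm
  -- the diagonal sequence y
  set y : ℕ → Bool := fun n => decide (t ≤ n) with hydef
  have hrq : Nat.rfind q = Part.some t := (Part.some_get hdom).symm
  have hcy : computesSeq k y := by
    intro n
    show (Denumerable.ofNat Code k).eval n = _
    rw [hk, Denumerable.ofNat_encode, hc]
    show (Nat.rfind q).map (fun t' => if n < t' then 0 else 1) = _
    rw [hrq, Part.map_some]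
    by_cases h : n < t
    · simp [hydef, Nat.not_le.mpr h, h]
    · simp [hydef, Nat.le_of_not_lt h, h]
  have hKy : Kseq y ≤ k := by
    refine le_trans (Nat.sInf_le ⟨k, hcy, rfl⟩) ?_
    exact Nat.size_le.mpr Nat.lt_two_pow_self
  have hycomp : Computable y :=
    by
      obtain ⟨_, h⟩ := Primrec.nat_le.comp (Primrec.const t) Primrec.id
      convert h.to_comp
      simp only [hydef, id]; congr 1
  obtain ⟨m1, e1, hm1, he1⟩ := hM y hycomp k hKy
  -- the two oracles agree up to length t
  have hpe : pref (oracleSeq k y) t = pref (oracleSeq k z) t := by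
    refine pref_congr fun i hi => ?_
    unfold oracleSeq
    rcases lt_trichotomy i k with h | h | h
    · simp [h]
    · simp [h]
    · have h1 : ¬ i < k := Nat.not_lt.mpr h.le
      have h2 : i ≠ k := h.ne'
      have h3 : i - k - 1 < t := lt_of_le_of_lt (Nat.le_trans (Nat.sub_le _ _) (Nat.sub_le _ _)) hi
      simp [h1, h2, hydef, Nat.not_le.mpr h3, hzdef]
  have hMyt : M (pref (oracleSeq k y) t) = some e := by
    rw [hpe]; exact he
  have hee1 : e1 = e := by
    rcases le_total m1 t with h | h
    · have h1 := mono hm1 (pref_prefix _ h)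
      rw [hMyt] at h1
      exact (Option.some_inj.mp h1).symm
    · have h1 := mono hMyt (pref_prefix _ h)
      rw [hm1] at h1
      exact Option.some_inj.mp h1
  -- contradiction at position t
  have h1 : phi e t = Part.some 1 := by
    have := he1 t
    rw [hee1] at this
    simpa [hydef] using this
  have h0 : phi e t = Part.some 0 := by
    have := he0 t
    rw [← hee0] at this
    simpa [hzdef] using this
  have : (1 : ℕ) = 0 := Part.some_inj.mp (h1.symm.trans h0)
  exact one_ne_zero this
end

section
/- Let A ⊆ ℕ be a c.e. set. Then there exist uniformly effective Scott-open sets U_k ⊆ P(ℕ) (each an effective union of basic sets ↑F = {S : F ⊆ S} for finite F) such that for every c.e. set E: (i) if every index of E belongs to A, then E ∈ U_k for all k; and (ii) if no index of E belongs to A, then E ∉ U_k for all k ≥ K(E), where K(E) is the least length of an index of E. -/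
/-- Basic Scott-open set: the collection of supersets of the finite set (listed by) `F`. -/
def upList (F : List ℕ) : Set (Set ℕ) := {S | ∀ x ∈ F, x ∈ S}

/-- A uniformly effective family of Scott-open subsets of `P(ℕ)`:
c.e. unions of basic sets `↑F`, uniformly in the parameter. -/
def EffOpenFamily (U : ℕ → Set (Set ℕ)) : Prop :=
  ∃ R : ℕ × List ℕ → Prop, REPred R ∧ ∀ k, U k = {S | ∃ F, R (k, F) ∧ S ∈ upList F}

/-- Kolmogorov complexity of a c.e. set: least binary length of an index. -/
noncomputable def KW (E : Set ℕ) : ℕ := sInf (Nat.size '' {e | W e = E})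

namespace Stmt2Aux

open Nat.Partrec (Code)
open Nat.Partrec.Code

/-- the trap with index `m` has been triggered by stage `t` (i.e. `m` has appeared in `A`,
where `a` is a code whose domain is `A`). -/
def trigB (a : Code) (m t : ℕ) : Bool := (evaln t a m).isSome

/-- `x` has appeared in `W i` by stage `t`. -/
def kB (i x t : ℕ) : Bool := (evaln t (Denumerable.ofNat Code i) x).isSome

/-- the index (as a natural number) of the trap machine with parameters `(e, j)`. -/
def mIdx (c : Code) (e j : ℕ) : ℕ := Encodable.encode (curry c (Nat.pair e j))

/-- semidecision procedure for membership in the trap's c.e. set: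
`x ∈ W (mIdx c e j)` iff `∃ t, condB a c e j x t`. -/
def condB (a c : Code) (e j x t : ℕ) : Bool :=
  (!trigB a (mIdx c e j) t && kB e x t) || (trigB a (mIdx c e j) t && kB j x t)

/-- `x` is enumerated into `W e` strictly before the trap `(e,j)` is triggered (bounded by `T`). -/
def psiB (a c : Code) (k e T x : ℕ) : Bool :=
  (List.range (2 ^ k)).foldr
    (fun j s =>
      ((List.range T).foldr
        (fun t s' => (!trigB a (mIdx c e j) t && kB e x t) || s') false) || s)
    false

/-- decidable matrix of the c.e. relation `R`. -/
def DB (a c : Code) (p : ℕ × List ℕ) (y : ℕ) : Bool :=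
  ((List.range (2 ^ p.1)).foldr
      (fun j s => trigB a (mIdx c y.unpair.1 j) y.unpair.2 && s) true) &&
  ((p.2.foldr (fun x s => psiB a c p.1 y.unpair.1 y.unpair.2 x && s) true) &&
   ((List.range y.unpair.2).foldr
      (fun x s => (!psiB a c p.1 y.unpair.1 y.unpair.2 x ||
        p.2.foldr (fun z s' => (z == x) || s') false) && s) true))

def Rrel (a c : Code) (p : ℕ × List ℕ) : Prop := ∃ y, DB a c p y = true

theorem foldr_and {β : Type*} (g : β → Bool) (l : List β) :
    (l.foldr (fun b s => g b && s) true = true) ↔ ∀ b ∈ l, g b = true := by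
  induction l with
  | nil => simp
  | cons b l ih => simp [ih]

theorem foldr_or {β : Type*} (g : β → Bool) (l : List β) :
    (l.foldr (fun b s => g b || s) false = true) ↔ ∃ b ∈ l, g b = true := by
  induction l with
  | nil => simp
  | cons b l ih => simp [ih]

theorem psiB_iff (a c : Code) (k e T x : ℕ) :
    psiB a c k e T x = true ↔
      ∃ j < 2 ^ k, ∃ t < T, trigB a (mIdx c e j) t = false ∧ kB e x t = true := by
  unfold psiB
  rw [foldr_or]
  constructor
  · rintro ⟨j, hj, hin⟩
    rw [foldr_or] at hin
    obtain ⟨t, ht, h⟩ := hin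
    rw [Bool.and_eq_true, Bool.not_eq_true'] at h
    exact ⟨j, List.mem_range.mp hj, t, List.mem_range.mp ht, h.1, h.2⟩
  · rintro ⟨j, hj, t, ht, h1, h2⟩
    refine ⟨j, List.mem_range.mpr hj, ?_⟩
    rw [foldr_or]
    exact ⟨t, List.mem_range.mpr ht, by simp [h1, h2]⟩

theorem DB_iff (a c : Code) (k : ℕ) (F : List ℕ) (y : ℕ) :
    DB a c (k, F) y = true ↔
      (∀ j < 2 ^ k, trigB a (mIdx c y.unpair.1 j) y.unpair.2 = true) ∧
      (∀ x ∈ F, psiB a c k y.unpair.1 y.unpair.2 x = true) ∧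
      (∀ x < y.unpair.2, psiB a c k y.unpair.1 y.unpair.2 x = true → x ∈ F) := by
  unfold DB
  simp only [Bool.and_eq_true]
  rw [foldr_and, foldr_and, foldr_and]
  constructor
  · rintro ⟨h1, h2, h3⟩
    refine ⟨fun j hj => h1 j (List.mem_range.mpr hj), h2, fun x hx hpsi => ?_⟩
    have := h3 x (List.mem_range.mpr hx)
    rw [Bool.or_eq_true, Bool.not_eq_true'] at this
    rcases this with h | h
    · rw [hpsi] at h; exact absurd h (by simp)
    · rw [foldr_or] at h
      obtain ⟨z, hz, hzx⟩ := h
      rwa [show z = x from by simpa using hzx] at hz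
  · rintro ⟨h1, h2, h3⟩
    refine ⟨fun j hj => h1 j (List.mem_range.mp hj), h2, fun x hx => ?_⟩
    rw [Bool.or_eq_true, Bool.not_eq_true']
    by_cases hpsi : psiB a c k y.unpair.1 y.unpair.2 x = true
    · right
      rw [foldr_or]
      exact ⟨x, h3 x (List.mem_range.mp hx) hpsi, by simp⟩
    · left; simpa using hpsi

section Prim

variable {α : Type*} [Primcodable α]

theorem prim_mIdx (c : Code) {e j : α → ℕ} (he : Primrec e) (hj : Primrec j) :
    Primrec fun q => mIdx c (e q) (j q) :=
  Primrec.encode.comp (primrec₂_curry.comp (Primrec.const c) (Primrec₂.natPair.comp he hj))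

theorem prim_trigB (a : Code) {m t : α → ℕ} (hm : Primrec m) (ht : Primrec t) :
    Primrec fun q => trigB a (m q) (t q) :=
  Primrec.option_isSome.comp (primrec_evaln.comp ((ht.pair (Primrec.const a)).pair hm))

theorem prim_kB {i x t : α → ℕ} (hi : Primrec i) (hx : Primrec x) (ht : Primrec t) :
    Primrec fun q => kB (i q) (x q) (t q) :=
  Primrec.option_isSome.comp
    (primrec_evaln.comp ((ht.pair ((Primrec.ofNat Code).comp hi)).pair hx))

theorem prim_pow2 {k : α → ℕ} (hk : Primrec k) : Primrec fun q => 2 ^ k q := by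
  have h : Primrec (Nat.unpaired (· ^ · : ℕ → ℕ → ℕ)) := Primrec.nat_iff.2 Nat.Primrec.pow
  exact (h.comp (Primrec₂.natPair.comp (Primrec.const 2) hk)).of_eq fun q => by
    simp [Nat.unpaired]

theorem prim_psiB (a c : Code) {k e T x : α → ℕ}
    (hk : Primrec k) (he : Primrec e) (hT : Primrec T) (hx : Primrec x) :
    Primrec fun q => psiB a c (k q) (e q) (T q) (x q) := by
  have hstepG : Primrec₂ fun (qj : α × ℕ) (ts : ℕ × Bool) =>
      (!trigB a (mIdx c (e qj.1) qj.2) ts.1 && kB (e qj.1) (x qj.1) ts.1) || ts.2 :=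
    (Primrec.or.comp
      (Primrec.and.comp
        (Primrec.not.comp (prim_trigB a
          (prim_mIdx c (he.comp (Primrec.fst.comp Primrec.fst)) (Primrec.snd.comp Primrec.fst))
          (Primrec.fst.comp Primrec.snd)))
        (prim_kB (he.comp (Primrec.fst.comp Primrec.fst))
          (hx.comp (Primrec.fst.comp Primrec.fst)) (Primrec.fst.comp Primrec.snd)))
      (Primrec.snd.comp Primrec.snd)).to₂
  have hG : Primrec fun qj : α × ℕ =>
      (List.range (T qj.1)).foldr
        (fun t s' => (!trigB a (mIdx c (e qj.1) qj.2) t && kB (e qj.1) (x qj.1) t) || s')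
        false :=
    (Primrec.list_foldr (Primrec.list_range.comp (hT.comp Primrec.fst))
      (Primrec.const false) hstepG).of_eq fun q => rfl
  have hstep : Primrec₂ fun (q : α) (js : ℕ × Bool) =>
      ((List.range (T q)).foldr
        (fun t s' => (!trigB a (mIdx c (e q) js.1) t && kB (e q) (x q) t) || s')
        false) || js.2 :=
    (Primrec.or.comp (hG.comp (Primrec.fst.pair (Primrec.fst.comp Primrec.snd)))
      (Primrec.snd.comp Primrec.snd)).to₂
  exact (Primrec.list_foldr (Primrec.list_range.comp (prim_pow2 hk))
    (Primrec.const false) hstep).of_eq fun q => rfl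

theorem prim_DB (a c : Code) : Primrec₂ (DB a c) := by
  have hk : Primrec fun q : (ℕ × List ℕ) × ℕ => q.1.1 := Primrec.fst.comp Primrec.fst
  have hF : Primrec fun q : (ℕ × List ℕ) × ℕ => q.1.2 := Primrec.snd.comp Primrec.fst
  have he : Primrec fun q : (ℕ × List ℕ) × ℕ => q.2.unpair.1 :=
    Primrec.fst.comp (Primrec.unpair.comp Primrec.snd)
  have hT : Primrec fun q : (ℕ × List ℕ) × ℕ => q.2.unpair.2 :=
    Primrec.snd.comp (Primrec.unpair.comp Primrec.snd)
  have hstep1 : Primrec₂ fun (q : (ℕ × List ℕ) × ℕ) (js : ℕ × Bool) =>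
      trigB a (mIdx c q.2.unpair.1 js.1) q.2.unpair.2 && js.2 :=
    (Primrec.and.comp
      (prim_trigB a
        (prim_mIdx c (he.comp Primrec.fst) (Primrec.fst.comp Primrec.snd))
        (hT.comp Primrec.fst))
      (Primrec.snd.comp Primrec.snd)).to₂
  have h1 : Primrec fun q : (ℕ × List ℕ) × ℕ =>
      (List.range (2 ^ q.1.1)).foldr
        (fun j s => trigB a (mIdx c q.2.unpair.1 j) q.2.unpair.2 && s) true :=
    (Primrec.list_foldr (Primrec.list_range.comp (prim_pow2 hk))
      (Primrec.const true) hstep1).of_eq fun q => rfl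
  have hstep2 : Primrec₂ fun (q : (ℕ × List ℕ) × ℕ) (xs : ℕ × Bool) =>
      psiB a c q.1.1 q.2.unpair.1 q.2.unpair.2 xs.1 && xs.2 :=
    (Primrec.and.comp
      (prim_psiB a c (hk.comp Primrec.fst) (he.comp Primrec.fst) (hT.comp Primrec.fst)
        (Primrec.fst.comp Primrec.snd))
      (Primrec.snd.comp Primrec.snd)).to₂
  have h2 : Primrec fun q : (ℕ × List ℕ) × ℕ =>
      q.1.2.foldr (fun x s => psiB a c q.1.1 q.2.unpair.1 q.2.unpair.2 x && s) true :=
    (Primrec.list_foldr hF (Primrec.const true) hstep2).of_eq fun q => rfl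
  have hstepm : Primrec₂ fun (qx : ((ℕ × List ℕ) × ℕ) × ℕ) (zs : ℕ × Bool) =>
      (zs.1 == qx.2) || zs.2 :=
    (Primrec.or.comp
      (Primrec.beq.comp (Primrec.fst.comp Primrec.snd) (Primrec.snd.comp Primrec.fst))
      (Primrec.snd.comp Primrec.snd)).to₂
  have hmem : Primrec fun qx : ((ℕ × List ℕ) × ℕ) × ℕ =>
      qx.1.1.2.foldr (fun z s' => (z == qx.2) || s') false :=
    (Primrec.list_foldr (hF.comp Primrec.fst)
      (Primrec.const false) hstepm).of_eq fun q => rfl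
  have hstep3 : Primrec₂ fun (q : (ℕ × List ℕ) × ℕ) (xs : ℕ × Bool) =>
      (!psiB a c q.1.1 q.2.unpair.1 q.2.unpair.2 xs.1 ||
        q.1.2.foldr (fun z s' => (z == xs.1) || s') false) && xs.2 :=
    (Primrec.and.comp
      (Primrec.or.comp
        (Primrec.not.comp
          (prim_psiB a c (hk.comp Primrec.fst) (he.comp Primrec.fst) (hT.comp Primrec.fst)
            (Primrec.fst.comp Primrec.snd)))
        (hmem.comp (Primrec.fst.pair (Primrec.fst.comp Primrec.snd))))
      (Primrec.snd.comp Primrec.snd)).to₂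
  have h3 : Primrec fun q : (ℕ × List ℕ) × ℕ =>
      (List.range q.2.unpair.2).foldr
        (fun x s => (!psiB a c q.1.1 q.2.unpair.1 q.2.unpair.2 x ||
          q.1.2.foldr (fun z s' => (z == x) || s') false) && s) true :=
    (Primrec.list_foldr (Primrec.list_range.comp hT)
      (Primrec.const true) hstep3).of_eq fun q => rfl
  exact (Primrec.and.comp h1 (Primrec.and.comp h2 h3) : Primrec _)

end Prim

theorem rePred_Rrel (a c : Code) : REPred (Rrel a c) := by
  have hDB : Computable₂ (DB a c) := (prim_DB a c).to_comp
  have hpart : Partrec fun p : ℕ × List ℕ =>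
      Nat.rfind fun y => (Part.some (DB a c p y) : Part Bool) := by
    apply Partrec.rfind
    exact hDB.partrec₂
  refine hpart.dom_re.of_eq fun p => ?_
  refine Nat.rfind_dom.trans ?_
  constructor
  · rintro ⟨y, h1, _⟩
    exact ⟨y, (Part.mem_some_iff.mp h1).symm⟩
  · rintro ⟨y, h⟩
    exact ⟨y, Part.mem_some_iff.mpr h.symm, fun _ => trivial⟩

section Main

variable {A : Set ℕ} {a c : Code}

theorem mem_W_iff (i x : ℕ) : x ∈ W i ↔ ∃ t, kB i x t = true := by
  show (phi i x).Dom ↔ _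
  rw [Part.dom_iff_mem]
  constructor
  · rintro ⟨y, hy⟩
    obtain ⟨t, ht⟩ := evaln_complete.mp hy
    exact ⟨t, by simpa [kB, Option.isSome_iff_exists] using ⟨y, ht⟩⟩
  · rintro ⟨t, ht⟩
    rw [kB, Option.isSome_iff_exists] at ht
    obtain ⟨y, hy⟩ := ht
    exact ⟨y, evaln_sound hy⟩

theorem mem_WmIdx (hc : ∀ e j x, (eval (curry c (Nat.pair e j)) x).Dom ↔
      ∃ t, condB a c e j x t = true)
    (e j x : ℕ) : x ∈ W (mIdx c e j) ↔ ∃ t, condB a c e j x t = true := by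
  show (phi (mIdx c e j) x).Dom ↔ _
  rw [phi, mIdx, Denumerable.ofNat_encode]
  exact hc e j x

theorem trigB_mono {m t t' : ℕ} (h : t ≤ t') (ht : trigB a m t = true) :
    trigB a m t' = true := by
  rw [trigB, Option.isSome_iff_exists] at ht ⊢
  obtain ⟨y, hy⟩ := ht
  exact ⟨y, evaln_mono h hy⟩

theorem kB_mono {i x t t' : ℕ} (h : t ≤ t') (ht : kB i x t = true) : kB i x t' = true := by
  rw [kB, Option.isSome_iff_exists] at ht ⊢
  obtain ⟨y, hy⟩ := ht
  exact ⟨y, evaln_mono h hy⟩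

theorem trig_mem_A (ha : ∀ n, (eval a n).Dom ↔ n ∈ A) {m t : ℕ}
    (h : trigB a m t = true) : m ∈ A := by
  rw [trigB, Option.isSome_iff_exists] at h
  obtain ⟨y, hy⟩ := h
  exact (ha m).mp (Part.dom_iff_mem.mpr ⟨y, evaln_sound hy⟩)

theorem kB_mem_W {i x t : ℕ} (h : kB i x t = true) : x ∈ W i :=
  (mem_W_iff i x).mpr ⟨t, h⟩

theorem W_mIdx_of_not_trig (hc : ∀ e j x, (eval (curry c (Nat.pair e j)) x).Dom ↔
      ∃ t, condB a c e j x t = true)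
    {e j : ℕ} (h : ∀ t, trigB a (mIdx c e j) t = false) : W (mIdx c e j) = W e := by
  ext x
  rw [mem_WmIdx hc, mem_W_iff]
  constructor
  · rintro ⟨t, ht⟩
    rw [condB, h t] at ht
    simp only [Bool.not_false, Bool.true_and, Bool.false_and, Bool.or_false] at ht
    exact ⟨t, ht⟩
  · rintro ⟨t, ht⟩
    refine ⟨t, ?_⟩
    rw [condB, h t]
    simp [ht]

theorem W_mIdx_of_trig (hc : ∀ e j x, (eval (curry c (Nat.pair e j)) x).Dom ↔
      ∃ t, condB a c e j x t = true)
    {e j t0 : ℕ} (h : trigB a (mIdx c e j) t0 = true) :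
    W (mIdx c e j) =
      {x | ∃ t, trigB a (mIdx c e j) t = false ∧ kB e x t = true} ∪ W j := by
  ext x
  rw [Set.mem_union, mem_WmIdx hc, mem_W_iff]
  constructor
  · rintro ⟨t, ht⟩
    rw [condB, Bool.or_eq_true, Bool.and_eq_true, Bool.and_eq_true, Bool.not_eq_true'] at ht
    rcases ht with ⟨h1, h2⟩ | ⟨_, h2⟩
    · exact Or.inl ⟨t, h1, h2⟩
    · exact Or.inr ⟨t, h2⟩
  · rintro (⟨t, h1, h2⟩ | ⟨t, h2⟩)
    · exact ⟨t, by rw [condB, h1]; simp [h2]⟩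
    · refine ⟨max t0 t, ?_⟩
      rw [condB, trigB_mono (le_max_left t0 t) h]
      simp [kB_mono (le_max_right t0 t) h2]

end Main

end Stmt2Aux


/-- Basic extension lemma: for every c.e. `A ⊆ ℕ` there are uniformly effective Scott-open
sets `U_k` such that for every c.e. set `E`: if all indices of `E` are in `A` then `E ∈ U_k`
for all `k`, and if no index of `E` is in `A` then `E ∉ U_k` for all `k ≥ K(E)`. -/
theorem stmt2 (A : Set ℕ) (hA : REPred (· ∈ A)) :
    ∃ U : ℕ → Set (Set ℕ), EffOpenFamily U ∧
      ∀ E : Set ℕ, (∃ e, W e = E) →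
        ((∀ e, W e = E → e ∈ A) → ∀ k, E ∈ U k) ∧
        ((∀ e, W e = E → e ∉ A) → ∀ k, KW E ≤ k → E ∉ U k) := by
  classical
  open Nat.Partrec.Code Stmt2Aux in
  · -- a code whose domain is `A`
    obtain ⟨a, ha⟩ : ∃ a : Nat.Partrec.Code, ∀ n, (eval a n).Dom ↔ n ∈ A := by
      have h1 : Partrec fun n : ℕ =>
          (Part.assert (n ∈ A) fun _ => Part.some ()).map fun _ => (0 : ℕ) :=
        hA.map ((Computable.const (0 : ℕ)).comp Computable.fst).to₂
      obtain ⟨a, ha⟩ := exists_code.1 (Partrec.nat_iff.1 h1)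
      refine ⟨a, fun n => ?_⟩
      rw [ha]
      constructor
      · rintro h
        obtain ⟨y, hy⟩ := Part.dom_iff_mem.mp h
        rw [Part.mem_map_iff] at hy
        obtain ⟨u, hu, _⟩ := hy
        exact (Part.mem_assert_iff.mp hu).fst
      · intro h
        exact Part.dom_iff_mem.mpr ⟨0, (Part.mem_map_iff _).mpr
          ⟨(), Part.mem_assert_iff.mpr ⟨h, Part.mem_some _⟩, rfl⟩⟩
    -- the trap machine, by the recursion theorem
    obtain ⟨c, hc⟩ : ∃ c : Nat.Partrec.Code, ∀ e j x,
        (eval (curry c (Nat.pair e j)) x).Dom ↔ ∃ t, condB a c e j x t = true := by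
      have hprim : Primrec fun q : (Nat.Partrec.Code × ℕ) × ℕ =>
          condB a q.1.1 q.1.2.unpair.1.unpair.1 q.1.2.unpair.1.unpair.2 q.1.2.unpair.2 q.2 := by
        have he : Primrec fun q : (Nat.Partrec.Code × ℕ) × ℕ => q.1.2.unpair.1.unpair.1 :=
          Primrec.fst.comp (Primrec.unpair.comp
            (Primrec.fst.comp (Primrec.unpair.comp (Primrec.snd.comp Primrec.fst))))
        have hj : Primrec fun q : (Nat.Partrec.Code × ℕ) × ℕ => q.1.2.unpair.1.unpair.2 :=
          Primrec.snd.comp (Primrec.unpair.comp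
            (Primrec.fst.comp (Primrec.unpair.comp (Primrec.snd.comp Primrec.fst))))
        have hx : Primrec fun q : (Nat.Partrec.Code × ℕ) × ℕ => q.1.2.unpair.2 :=
          Primrec.snd.comp (Primrec.unpair.comp (Primrec.snd.comp Primrec.fst))
        have ht : Primrec fun q : (Nat.Partrec.Code × ℕ) × ℕ => q.2 := Primrec.snd
        have hm : Primrec fun q : (Nat.Partrec.Code × ℕ) × ℕ =>
            mIdx q.1.1 q.1.2.unpair.1.unpair.1 q.1.2.unpair.1.unpair.2 :=
          Primrec.encode.comp (primrec₂_curry.comp (Primrec.fst.comp Primrec.fst)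
            (Primrec₂.natPair.comp he hj))
        exact Primrec.or.comp
          (Primrec.and.comp
            (Primrec.not.comp (prim_trigB a hm ht))
            (prim_kB he hx ht))
          (Primrec.and.comp (prim_trigB a hm ht) (prim_kB hj hx ht))
      have hf0 : Partrec fun q : Nat.Partrec.Code × ℕ =>
          Nat.rfind fun t => (Part.some
            (condB a q.1 q.2.unpair.1.unpair.1 q.2.unpair.1.unpair.2 q.2.unpair.2 t) :
              Part Bool) := by
        apply Partrec.rfind
        exact (hprim.to_comp.to₂).partrec₂
      obtain ⟨c, hcfix⟩ := fixed_point₂ hf0.to₂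
      refine ⟨c, fun e j x => ?_⟩
      have : eval (curry c (Nat.pair e j)) x = Nat.rfind fun t =>
          (Part.some (condB a c e j x t) : Part Bool) := by
        rw [eval_curry, hcfix]
        simp
      rw [this]
      refine Nat.rfind_dom.trans ?_
      constructor
      · rintro ⟨t, h1, _⟩
        exact ⟨t, (Part.mem_some_iff.mp h1).symm⟩
      · rintro ⟨t, h⟩
        exact ⟨t, Part.mem_some_iff.mpr h.symm, fun _ => trivial⟩
    refine ⟨fun k => {S | ∃ F, Rrel a c (k, F) ∧ S ∈ upList F},
      ⟨Rrel a c, rePred_Rrel a c, fun k => rfl⟩, ?_⟩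
    rintro E ⟨e0, hWe0⟩
    constructor
    · -- all indices of E in A: E is in every U k
      intro hGood k
      have htrig : ∀ j : ℕ, ∃ t, trigB a (mIdx c e0 j) t = true := by
        intro j
        by_contra hno
        push_neg at hno
        have h' : ∀ t, trigB a (mIdx c e0 j) t = false :=
          fun t => Bool.eq_false_iff.mpr (hno t)
        have hW : W (mIdx c e0 j) = E := by
          rw [W_mIdx_of_not_trig hc h', hWe0]
        have hmA : mIdx c e0 j ∈ A := hGood _ hW
        rw [← ha] at hmA
        obtain ⟨y, hy⟩ := Part.dom_iff_mem.mp hmA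
        obtain ⟨t, ht⟩ := evaln_complete.mp hy
        exact hno t (by rw [trigB, Option.isSome_iff_exists]; exact ⟨y, ht⟩)
      have hTex : ∀ n : ℕ, ∃ T, ∀ j < n, trigB a (mIdx c e0 j) T = true := by
        intro n
        induction n with
        | zero => exact ⟨0, fun j hj => absurd hj (Nat.not_lt_zero j)⟩
        | succ n ih =>
          obtain ⟨T, hT⟩ := ih
          obtain ⟨t, ht⟩ := htrig n
          refine ⟨max T t, fun j hj => ?_⟩
          rcases Nat.lt_succ_iff_lt_or_eq.mp hj with h | h
          · exact trigB_mono (le_max_left T t) (hT j h)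
          · subst h; exact trigB_mono (le_max_right T t) ht
      obtain ⟨T, hTT⟩ := hTex (2 ^ k)
      refine ⟨(List.range T).filter (fun x => psiB a c k e0 T x), ⟨Nat.pair e0 T, ?_⟩, ?_⟩
      · rw [DB_iff]
        simp only [Nat.unpair_pair]
        refine ⟨hTT, ?_, ?_⟩
        · intro x hx
          exact (List.mem_filter.mp hx).2
        · intro x hx hpsi
          exact List.mem_filter.mpr ⟨List.mem_range.mpr hx, hpsi⟩
      · intro x hx
        have hpsi := (List.mem_filter.mp hx).2
        rw [psiB_iff] at hpsi
        obtain ⟨j, _, t, _, _, hk⟩ := hpsi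
        rw [← hWe0]
        exact kB_mem_W hk
    · -- no index of E in A: E avoids U k for k ≥ KW E
      intro hBad k hKW
      rintro ⟨F, ⟨y, hDBy⟩, hFE⟩
      rw [DB_iff] at hDBy
      obtain ⟨h1, h2, h3⟩ := hDBy
      have hne : (Nat.size '' {i | W i = E}).Nonempty := ⟨Nat.size e0, e0, hWe0, rfl⟩
      obtain ⟨j, hjW, hjsize⟩ := Nat.sInf_mem hne
      have hjk : j < 2 ^ k := Nat.size_le.mp (by rw [hjsize]; exact hKW)
      have htri := h1 j hjk
      have hmA : mIdx c y.unpair.1 j ∈ A := trig_mem_A ha htri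
      have hWm : W (mIdx c y.unpair.1 j) = E := by
        rw [W_mIdx_of_trig hc htri, hjW]
        apply Set.Subset.antisymm
        · rintro x (⟨t, htf, hkx⟩ | hxE)
          · have htT : t < y.unpair.2 := by
              by_contra hle
              push_neg at hle
              rw [trigB_mono hle htri] at htf
              exact absurd htf (by simp)
            have hxT : x < y.unpair.2 := by
              rw [kB, Option.isSome_iff_exists] at hkx
              obtain ⟨v, hv⟩ := hkx
              exact lt_trans (evaln_bound hv) htT
            have hpsi : psiB a c k y.unpair.1 y.unpair.2 x = true :=
              (psiB_iff a c k y.unpair.1 y.unpair.2 x).mpr ⟨j, hjk, t, htT, htf, hkx⟩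
            exact hFE x (h3 x hxT hpsi)
          · exact hxE
        · intro x hxE
          exact Or.inr hxE
      exact hBad _ hWm hmA
end

section
/- A set A of c.e. subsets of ℕ is Markov-semidecidable if and only if it is K-semidecidable. Precisely: there exists a c.e. set I ⊆ ℕ such that for all e, W_e ∈ A ↔ e ∈ I, if and only if there exist uniformly effective Scott-open sets U_k ⊆ P(ℕ) such that for every c.e. set E with K(E) ≤ k, E ∈ A ↔ E ∈ U_k. -/
namespace Stmt3Aux

open Nat.Partrec (Code)
open Nat.Partrec.Code
open Encodable Denumerable

/-- Stage-`s` approximation to the halting of code `c` on input `n`. -/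
def stg (c : Code) (s n : ℕ) : Bool := (evaln s c n).isSome

lemma stg_mono {c : Code} {s s' n : ℕ} (h : s ≤ s') (hs : stg c s n = true) :
    stg c s' n = true := by
  unfold stg at *
  rw [Option.isSome_iff_exists] at *
  obtain ⟨x, hx⟩ := hs
  exact ⟨x, evaln_mono h hx⟩

lemma dom_iff_stg (c : Code) (n : ℕ) : (c.eval n).Dom ↔ ∃ s, stg c s n = true := by
  rw [Part.dom_iff_mem]
  constructor
  · rintro ⟨x, hx⟩
    obtain ⟨k, hk⟩ := evaln_complete.1 hx
    exact ⟨k, by unfold stg; rw [Option.isSome_iff_exists]; exact ⟨x, hk⟩⟩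
  · rintro ⟨s, hs⟩
    unfold stg at hs
    rw [Option.isSome_iff_exists] at hs
    obtain ⟨x, hx⟩ := hs
    exact ⟨x, evaln_sound hx⟩

lemma stg_bound {c : Code} {s n : ℕ} (h : stg c s n = true) : n < s := by
  unfold stg at h
  rw [Option.isSome_iff_exists] at h
  obtain ⟨x, hx⟩ := h
  exact evaln_bound hx

lemma mem_W_iff (e x : ℕ) : x ∈ W e ↔ ((Denumerable.ofNat Code e).eval x).Dom := Iff.rfl

lemma mem_W_encode (t : Code) (x : ℕ) : x ∈ W (Encodable.encode t) ↔ (t.eval x).Dom := by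
  rw [mem_W_iff, Denumerable.ofNat_encode]

/-- Primitive recursiveness of the stage predicate with a fixed code. -/
lemma stg_prim (c : Code) : Primrec₂ (fun s n => stg c s n) := by
  unfold stg
  exact Primrec.option_isSome.comp
    (primrec_evaln.comp ((Primrec.fst.pair (Primrec.const c)).pair Primrec.snd))

/-- Kleene-style self-referential construction: a code `t` whose domain is
given by an unbounded search over a computable predicate that may consult
(the numeral of) `t` itself. -/
lemma selfref (Q : ℕ → ℕ → ℕ → Bool)
    (hQ : Computable fun p : ℕ × ℕ × ℕ => Q p.1 p.2.1 p.2.2) :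
    ∃ t : Code, ∀ x, (t.eval x).Dom ↔ ∃ s, Q (Encodable.encode t) x s = true := by
  have hq : Computable₂ fun (p : Code × ℕ) (s : ℕ) => Q (Encodable.encode p.1) p.2 s := by
    have : Computable fun q : (Code × ℕ) × ℕ =>
        ((Encodable.encode q.1.1, q.1.2, q.2) : ℕ × ℕ × ℕ) :=
      (Computable.encode.comp (Computable.fst.comp Computable.fst)).pair
        ((Computable.snd.comp Computable.fst).pair Computable.snd)
    exact (hQ.comp this).to₂
  have hf : Partrec₂ fun (c : Code) (x : ℕ) =>
      (Nat.rfind fun s => Part.some (Q (Encodable.encode c) x s)).map fun _ => 0 := by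
    have h1 : Partrec fun p : Code × ℕ =>
        Nat.rfind fun s => Part.some (Q (Encodable.encode p.1) p.2 s) :=
      Partrec.rfind hq.partrec₂
    exact h1.map ((Computable.const 0).comp Computable.fst).to₂
  obtain ⟨t, ht⟩ := fixed_point₂ hf
  refine ⟨t, fun x => ?_⟩
  have hx : t.eval x =
      (Nat.rfind fun s => Part.some (Q (Encodable.encode t) x s)).map fun _ => 0 :=
    congrFun ht x
  rw [hx, Part.map_Dom]
  refine Nat.rfind_dom.trans ?_
  constructor
  · rintro ⟨s, hs, -⟩
    exact ⟨s, (Part.mem_some_iff.1 hs).symm⟩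
  · rintro ⟨s, hs⟩
    exact ⟨s, Part.mem_some_iff.2 hs.symm, fun _ => Part.some_dom _⟩

section Markov

variable {A : Set (Set ℕ)} {I : Set ℕ}

lemma code_for_I (hI : REPred (· ∈ I)) :
    ∃ cI : Code, ∀ e, e ∈ I ↔ (cI.eval e).Dom := by
  have h1 : Partrec fun e : ℕ =>
      (Part.assert (e ∈ I) fun _ => Part.some ()).map fun _ => 0 :=
    hI.map ((Computable.const 0).comp Computable.fst).to₂
  obtain ⟨cI, hcI⟩ := exists_code.1 (Partrec.nat_iff.1 h1)
  refine ⟨cI, fun e => ?_⟩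
  have : cI.eval e = (Part.assert (e ∈ I) fun _ => Part.some ()).map fun _ => 0 :=
    congrFun hcI e
  rw [this, Part.map_Dom]
  exact ⟨fun h => ⟨h, trivial⟩, fun ⟨h, _⟩ => h⟩

/-- Markov-semidecidable classes are monotone on c.e. sets. -/
lemma mono (hI : REPred (· ∈ I)) (hext : ∀ e, W e ∈ A ↔ e ∈ I)
    (e1 e2 : ℕ) (h1 : W e1 ∈ A) (h12 : W e1 ⊆ W e2) : W e2 ∈ A := by
  obtain ⟨cI, hcI⟩ := code_for_I hI
  set cE := Denumerable.ofNat Code e1 with hcE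
  set cE' := Denumerable.ofNat Code e2 with hcE'
  have hcomp : Computable fun p : ℕ × ℕ × ℕ =>
      stg cE p.2.2 p.2.1 || (stg cI p.2.2 p.1 && stg cE' p.2.2 p.2.1) := by
    have hs1 : Primrec fun p : ℕ × ℕ × ℕ => stg cE p.2.2 p.2.1 :=
      (stg_prim cE).comp (Primrec.snd.comp Primrec.snd) (Primrec.fst.comp Primrec.snd)
    have hs2 : Primrec fun p : ℕ × ℕ × ℕ => stg cI p.2.2 p.1 :=
      (stg_prim cI).comp (Primrec.snd.comp Primrec.snd) Primrec.fst
    have hs3 : Primrec fun p : ℕ × ℕ × ℕ => stg cE' p.2.2 p.2.1 :=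
      (stg_prim cE').comp (Primrec.snd.comp Primrec.snd) (Primrec.fst.comp Primrec.snd)
    exact (Primrec.or.comp hs1 (Primrec.and.comp hs2 hs3)).to_comp
  obtain ⟨t, ht⟩ := selfref
    (fun t x s => stg cE s x || (stg cI s t && stg cE' s x)) hcomp
  by_cases hti : Encodable.encode t ∈ I
  · have hWt : W (Encodable.encode t) = W e2 := by
      ext x
      rw [mem_W_encode, ht]
      constructor
      · rintro ⟨s, hs⟩
        rcases Bool.or_eq_true_iff.1 hs with h | h
        · exact h12 ((mem_W_iff e1 x).2 ((dom_iff_stg cE x).2 ⟨s, h⟩))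
        · rw [Bool.and_eq_true] at h
          exact (mem_W_iff e2 x).2 ((dom_iff_stg cE' x).2 ⟨s, h.2⟩)
      · intro hx
        obtain ⟨s1, hs1⟩ := (dom_iff_stg cE' x).1 ((mem_W_iff e2 x).1 hx)
        obtain ⟨s2, hs2⟩ := (dom_iff_stg cI (Encodable.encode t)).1 ((hcI _).1 hti)
        refine ⟨max s1 s2, ?_⟩
        rw [Bool.or_eq_true_iff]
        exact Or.inr (by
          rw [Bool.and_eq_true]
          exact ⟨stg_mono (le_max_right _ _) hs2, stg_mono (le_max_left _ _) hs1⟩)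
    rw [← hWt]
    exact (hext _).2 hti
  · exfalso
    apply hti
    apply (hext _).1
    have hWt : W (Encodable.encode t) = W e1 := by
      ext x
      rw [mem_W_encode, ht]
      constructor
      · rintro ⟨s, hs⟩
        rcases Bool.or_eq_true_iff.1 hs with h | h
        · exact (mem_W_iff e1 x).2 ((dom_iff_stg cE x).2 ⟨s, h⟩)
        · rw [Bool.and_eq_true] at h
          exact absurd ((hcI _).2 ((dom_iff_stg cI _).2 ⟨s, h.1⟩)) hti
      · intro hx
        obtain ⟨s, hs⟩ := (dom_iff_stg cE x).1 ((mem_W_iff e1 x).1 hx)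
        exact ⟨s, Bool.or_eq_true_iff.2 (Or.inl hs)⟩
    rw [hWt]
    exact h1

/-- Every member of a Markov-semidecidable class has a finite subset
(listed by some `F`) that is itself in the class. -/
lemma fin_sub (hI : REPred (· ∈ I)) (hext : ∀ e, W e ∈ A ↔ e ∈ I)
    (e : ℕ) (hA : W e ∈ A) :
    ∃ F : List ℕ, {x | x ∈ F} ∈ A ∧ ∀ x ∈ F, x ∈ W e := by
  obtain ⟨cI, hcI⟩ := code_for_I hI
  set cE := Denumerable.ofNat Code e with hcE
  have hcomp : Computable fun p : ℕ × ℕ × ℕ =>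
      stg cE p.2.2 p.2.1 && !(stg cI p.2.2 p.1) := by
    have hs1 : Primrec fun p : ℕ × ℕ × ℕ => stg cE p.2.2 p.2.1 :=
      (stg_prim cE).comp (Primrec.snd.comp Primrec.snd) (Primrec.fst.comp Primrec.snd)
    have hs2 : Primrec fun p : ℕ × ℕ × ℕ => stg cI p.2.2 p.1 :=
      (stg_prim cI).comp (Primrec.snd.comp Primrec.snd) Primrec.fst
    exact (Primrec.and.comp hs1 (Primrec.not.comp hs2)).to_comp
  obtain ⟨t, ht⟩ := selfref (fun t x s => stg cE s x && !(stg cI s t)) hcomp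
  by_cases hti : Encodable.encode t ∈ I
  · have hex : ∃ s, stg cI s (Encodable.encode t) = true :=
      (dom_iff_stg cI _).1 ((hcI _).1 hti)
    set s₀ := Nat.find hex with hs₀def
    have hs₀ : stg cI s₀ (Encodable.encode t) = true := Nat.find_spec hex
    have hmin : ∀ s < s₀, ¬ stg cI s (Encodable.encode t) = true :=
      fun s hs => Nat.find_min hex hs
    have hpos : 0 < s₀ := by
      rcases Nat.eq_zero_or_pos s₀ with h0 | h
      · exfalso
        rw [h0] at hs₀
        exact absurd (stg_bound hs₀) (Nat.not_lt_zero _)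
      · exact h
    set u := s₀ - 1 with hudef
    have hu : u < s₀ := Nat.sub_lt hpos one_pos
    have hWt : ∀ x, (t.eval x).Dom ↔ stg cE u x = true := by
      intro x
      rw [ht]
      constructor
      · rintro ⟨s, hs⟩
        rw [Bool.and_eq_true] at hs
        have hss : s < s₀ := by
          by_contra hge
          push_neg at hge
          have := stg_mono hge hs₀
          rw [this] at hs
          simp at hs
        exact stg_mono (by omega : s ≤ u) hs.1
      · intro hx
        refine ⟨u, ?_⟩
        rw [Bool.and_eq_true]
        refine ⟨hx, ?_⟩
        have := hmin u hu
        simp only [Bool.not_eq_true] at this ⊢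
        rw [this]
        rfl
    refine ⟨(List.range s₀).filter (fun x => stg cE u x), ?_, ?_⟩
    · have hset : {x | x ∈ (List.range s₀).filter fun x => stg cE u x}
          = W (Encodable.encode t) := by
        ext x
        rw [Set.mem_setOf_eq, List.mem_filter, List.mem_range, mem_W_encode, hWt]
        constructor
        · rintro ⟨-, h⟩; exact h
        · intro h
          exact ⟨lt_trans (stg_bound h) hu, h⟩
      rw [hset]
      exact (hext _).2 hti
    · intro x hx
      rw [List.mem_filter] at hx
      exact (mem_W_iff e x).2 ((dom_iff_stg cE x).2 ⟨u, hx.2⟩)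
  · exfalso
    apply hti
    apply (hext _).1
    have hWt : W (Encodable.encode t) = W e := by
      ext x
      rw [mem_W_encode, ht]
      constructor
      · rintro ⟨s, hs⟩
        rw [Bool.and_eq_true] at hs
        exact (mem_W_iff e x).2 ((dom_iff_stg cE x).2 ⟨s, hs.1⟩)
      · intro hx
        obtain ⟨s, hs⟩ := (dom_iff_stg cE x).1 ((mem_W_iff e x).1 hx)
        refine ⟨s, ?_⟩
        rw [Bool.and_eq_true]
        refine ⟨hs, ?_⟩
        have : ¬ stg cI s (Encodable.encode t) = true := fun h =>
          hti ((hcI _).2 ((dom_iff_stg cI _).2 ⟨s, h⟩))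
        simp only [Bool.not_eq_true] at this ⊢
        rw [this]
        rfl
    rw [hWt]
    exact hA

end Markov

/-- Boolean list membership. -/
def memb (x : ℕ) (F : List ℕ) : Bool := F.foldr (fun a b => (a == x) || b) false

lemma memb_iff {x : ℕ} {F : List ℕ} : memb x F = true ↔ x ∈ F := by
  induction F with
  | nil => simp [memb]
  | cons a F ih =>
    unfold memb at ih ⊢
    rw [List.foldr_cons, Bool.or_eq_true, beq_iff_eq, ih, List.mem_cons]
    constructor
    · rintro (h | h)
      exacts [Or.inl h.symm, Or.inr h]
    · rintro (h | h)
      exacts [Or.inl h.symm, Or.inr h]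

lemma memb_prim : Primrec₂ memb := by
  unfold memb
  have := Primrec.list_foldr (f := fun p : ℕ × List ℕ => p.2)
    (g := fun _ : ℕ × List ℕ => false)
    (h := fun (p : ℕ × List ℕ) (q : ℕ × Bool) => (q.1 == p.1) || q.2)
    Primrec.snd (Primrec.const false)
    (Primrec.or.comp
      (Primrec.beq.comp (Primrec.fst.comp Primrec.snd) (Primrec.fst.comp Primrec.fst))
      (Primrec.snd.comp Primrec.snd)).to₂
  exact this.to₂

/-- A computable function giving a code of (the set listed by) a list. -/
lemma list_code : ∃ c : List ℕ → ℕ, Computable c ∧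
    ∀ F : List ℕ, W (c F) = {x | x ∈ F} := by
  have hb : Computable fun m : ℕ =>
      memb m.unpair.2 (Denumerable.ofNat (List ℕ) m.unpair.1) :=
    (memb_prim.comp (Primrec.snd.comp Primrec.unpair)
      ((Primrec.ofNat (List ℕ)).comp (Primrec.fst.comp Primrec.unpair))).to_comp
  have hp : Partrec fun m : ℕ =>
      bif memb m.unpair.2 (Denumerable.ofNat (List ℕ) m.unpair.1)
        then Part.some 0 else Part.none :=
    Partrec.cond hb (Computable.const 0).partrec Partrec.none
  obtain ⟨c₀, hc₀⟩ := exists_code.1 (Partrec.nat_iff.1 hp)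
  refine ⟨fun F => Encodable.encode (c₀.curry (Encodable.encode F)), ?_, ?_⟩
  · exact (Primrec.encode.comp
      (primrec₂_curry.comp (Primrec.const c₀) Primrec.encode)).to_comp
  · intro F
    ext x
    rw [mem_W_iff, Denumerable.ofNat_encode, eval_curry]
    have : c₀.eval (Nat.pair (Encodable.encode F) x) =
        bif memb (Nat.pair (Encodable.encode F) x).unpair.2
          (Denumerable.ofNat (List ℕ) (Nat.pair (Encodable.encode F) x).unpair.1)
        then Part.some 0 else Part.none := congrFun hc₀ _
    rw [this]
    simp only [Nat.unpair_pair, Denumerable.ofNat_encode]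
    rcases h : memb x F with _ | _
    · simp only [cond_false]
      constructor
      · intro hd
        exact hd.elim
      · intro hx
        exact absurd (memb_iff.2 hx) (by simp [h])
    · simp only [cond_true]
      constructor
      · intro _
        exact memb_iff.1 h
      · intro _
        exact Part.some_dom 0

lemma size_computable : Computable Nat.size := by
  have hpow : Primrec₂ (fun a b : ℕ => a ^ b) := Primrec₂.unpaired'.1 Nat.Primrec.pow
  have hlt : Primrec₂ fun (n k : ℕ) => decide (n < 2 ^ k) :=
    PrimrecPred.decide (Primrec.nat_lt.comp Primrec.fst (hpow.comp (Primrec.const 2) Primrec.snd))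
  have hp : Partrec fun n => Nat.rfind fun k => Part.some (decide (n < 2 ^ k)) :=
    Partrec.rfind hlt.to_comp.partrec₂
  apply hp.of_eq_tot
  intro n
  refine Nat.mem_rfind.2 ?_
  constructor
  · exact Part.mem_some_iff.2 (decide_eq_true (Nat.lt_size_self n)).symm
  · intro m hm
    have h' : ¬ n < 2 ^ m := fun h => absurd (Nat.size_le.2 h) (by omega)
    exact Part.mem_some_iff.2 (decide_eq_false h').symm

lemma stages_all (c : Code) (F : List ℕ) (h : ∀ x ∈ F, (c.eval x).Dom) :
    ∃ s, ∀ x ∈ F, stg c s x = true := by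
  induction F with
  | nil => exact ⟨0, fun x hx => absurd hx List.not_mem_nil⟩
  | cons a F ih =>
    obtain ⟨s1, hs1⟩ := ih (fun x hx => h x (List.mem_cons_of_mem a hx))
    obtain ⟨s2, hs2⟩ := (dom_iff_stg c a).1 (h a List.mem_cons_self)
    refine ⟨max s1 s2, fun x hx => ?_⟩
    rcases List.mem_cons.1 hx with rfl | hx
    · exact stg_mono (le_max_right _ _) hs2
    · exact stg_mono (le_max_left _ _) (hs1 x hx)

lemma foldr_all_iff (g : ℕ → Bool) (F : List ℕ) :
    (F.foldr (fun x b => g x && b) true = true) ↔ ∀ x ∈ F, g x = true := by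
  induction F with
  | nil => simp
  | cons a F ih => simp [List.foldr_cons, ih]

end Stmt3Aux

open Stmt3Aux Nat.Partrec.Code
open Nat.Partrec (Code)

/-- A set `A` of c.e. subsets of `ℕ` is Markov-semidecidable (membership semidecidable from
indices, via a c.e. index-invariant set `I`) iff it is K-semidecidable (there are uniformly
effective Scott-open sets `U_k` agreeing with `A` on c.e. sets of complexity `≤ k`). -/
theorem stmt3 (A : Set (Set ℕ)) :
    (∃ I : Set ℕ, REPred (· ∈ I) ∧ ∀ e, (W e ∈ A ↔ e ∈ I)) ↔
    (∃ U : ℕ → Set (Set ℕ), EffOpenFamily U ∧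
      ∀ (k : ℕ) (E : Set ℕ), (∃ e, W e = E) → KW E ≤ k → (E ∈ A ↔ E ∈ U k)) := by
  constructor
  · rintro ⟨I, hI, hext⟩
    obtain ⟨c, hc_comp, hcW⟩ := list_code
    refine ⟨fun _ => {S | ∃ F : List ℕ, c F ∈ I ∧ S ∈ upList F},
      ⟨fun p => c p.2 ∈ I, ?_, fun k => rfl⟩, ?_⟩
    · exact hI.comp (hc_comp.comp Computable.snd)
    · rintro k E ⟨e, rfl⟩ -
      constructor
      · intro hA
        obtain ⟨F, hFA, hFsub⟩ := fin_sub hI hext e hA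
        exact ⟨F, (hext (c F)).1 (by rw [hcW]; exact hFA), hFsub⟩
      · rintro ⟨F, hcF, hup⟩
        refine mono hI hext (c F) e ((hext (c F)).2 hcF) ?_
        rw [hcW]
        intro x hx
        exact hup x hx
  · rintro ⟨U, ⟨R, hR, hUeq⟩, hU⟩
    -- a code for the semidecidable predicate R
    have h2 : Partrec fun m : ℕ =>
        (Part.assert (R (m.unpair.1, Denumerable.ofNat (List ℕ) m.unpair.2))
          fun _ => Part.some ()).map fun _ => 0 := by
      have hg : Computable fun m : ℕ =>
          ((m.unpair.1, Denumerable.ofNat (List ℕ) m.unpair.2) : ℕ × List ℕ) :=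
        ((Primrec.fst.comp Primrec.unpair).pair
          ((Primrec.ofNat (List ℕ)).comp (Primrec.snd.comp Primrec.unpair))).to_comp
      exact (hR.comp hg).map ((Computable.const 0).comp Computable.fst).to₂
    obtain ⟨cR, hcR⟩ := exists_code.1 (Partrec.nat_iff.1 h2)
    have hRdom : ∀ (k : ℕ) (F : List ℕ),
        R (k, F) ↔ (cR.eval (Nat.pair k (Encodable.encode F))).Dom := by
      intro k F
      have : cR.eval (Nat.pair k (Encodable.encode F)) =
          (Part.assert (R ((Nat.pair k (Encodable.encode F)).unpair.1,
            Denumerable.ofNat (List ℕ) ((Nat.pair k (Encodable.encode F)).unpair.2)))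
            fun _ => Part.some ()).map fun _ => 0 := congrFun hcR _
      constructor
      · intro h
        rw [this, Part.map_Dom]
        exact ⟨by simpa using h, trivial⟩
      · intro h
        rw [this, Part.map_Dom] at h
        simpa using h.fst
    -- the Markov semidecision procedure
    set q : ℕ → ℕ → Bool := fun e n =>
      stg cR n.unpair.2 (Nat.pair (Nat.size e) n.unpair.1) &&
      ((Denumerable.ofNat (List ℕ) n.unpair.1).foldr
        (fun x b => stg (Denumerable.ofNat Code e) n.unpair.2 x && b) true) with hq_def
    have hq_comp : Computable₂ q := by
      have hQ' : Primrec fun p : (ℕ × ℕ) × ℕ =>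
          stg cR p.2.unpair.2 (Nat.pair p.1.2 p.2.unpair.1) &&
          ((Denumerable.ofNat (List ℕ) p.2.unpair.1).foldr
            (fun x b => stg (Denumerable.ofNat Code p.1.1) p.2.unpair.2 x && b) true) := by
        have hstg : Primrec fun r : ((ℕ × ℕ) × ℕ) × (ℕ × ℕ) × Code => stg r.2.2 r.2.1.1 r.2.1.2 := by
          unfold stg
          exact Primrec.option_isSome.comp (primrec_evaln.comp
            (((Primrec.fst.comp (Primrec.fst.comp Primrec.snd)).pair
              (Primrec.snd.comp Primrec.snd)).pair
              (Primrec.snd.comp (Primrec.fst.comp Primrec.snd))))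
        have h1 : Primrec fun p : (ℕ × ℕ) × ℕ =>
            stg cR p.2.unpair.2 (Nat.pair p.1.2 p.2.unpair.1) := by
          unfold stg
          exact Primrec.option_isSome.comp (primrec_evaln.comp
            ((((Primrec.snd.comp (Primrec.unpair.comp Primrec.snd)).pair
                (Primrec.const cR))).pair
              (Primrec₂.natPair.comp (Primrec.snd.comp Primrec.fst)
                (Primrec.fst.comp (Primrec.unpair.comp Primrec.snd)))))
        have h2' : Primrec fun p : (ℕ × ℕ) × ℕ =>
            ((Denumerable.ofNat (List ℕ) p.2.unpair.1).foldr
              (fun x b => stg (Denumerable.ofNat Code p.1.1) p.2.unpair.2 x && b) true) := by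
          have hh : Primrec fun pr : ((ℕ × ℕ) × ℕ) × ℕ × Bool =>
              stg (Denumerable.ofNat Code pr.1.1.1) pr.1.2.unpair.2 pr.2.1 && pr.2.2 := by
            refine Primrec.and.comp ?_ (Primrec.snd.comp Primrec.snd)
            unfold stg
            exact Primrec.option_isSome.comp (primrec_evaln.comp
              (((Primrec.snd.comp (Primrec.unpair.comp (Primrec.snd.comp Primrec.fst))).pair
                ((Primrec.ofNat Code).comp
                  (Primrec.fst.comp (Primrec.fst.comp Primrec.fst)))).pair
                (Primrec.fst.comp Primrec.snd)))
          exact Primrec.list_foldr (f := fun p : (ℕ × ℕ) × ℕ => Denumerable.ofNat (List ℕ) p.2.unpair.1)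
            (g := fun _ : (ℕ × ℕ) × ℕ => true)
            (h := fun (p : (ℕ × ℕ) × ℕ) (q : ℕ × Bool) =>
              stg (Denumerable.ofNat Code p.1.1) p.2.unpair.2 q.1 && q.2)
            ((Primrec.ofNat (List ℕ)).comp (Primrec.fst.comp (Primrec.unpair.comp Primrec.snd)))
            (Primrec.const true) hh.to₂
        exact Primrec.and.comp h1 h2'
      have hsz : Computable fun p : ℕ × ℕ => ((p.1, Nat.size p.1), p.2) :=
        ((Computable.fst.pair (size_computable.comp Computable.fst)).pair Computable.snd)
      exact (hQ'.to_comp.comp hsz).to₂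
    refine ⟨{e | ∃ n, q e n = true}, ?_, ?_⟩
    · -- REPred
      have h3 : Partrec fun e : ℕ =>
          (Nat.rfind fun n => Part.some (q e n)).map fun _ => () :=
        (Partrec.rfind hq_comp.partrec₂).map ((Computable.const ()).comp Computable.fst).to₂
      apply h3.of_eq
      intro e
      apply Part.ext
      intro u
      have hu : u = () := rfl
      subst hu
      constructor
      · intro h
        obtain ⟨n, hn, -⟩ := (Part.mem_map_iff _).1 h
        have h1 := Nat.rfind_spec hn
        refine Part.mem_assert_iff.2 ⟨?_, Part.mem_some_iff.2 rfl⟩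
        exact show ∃ n, q e n = true from ⟨n, (Part.mem_some_iff.1 h1).symm⟩
      · intro h
        obtain ⟨hmem, -⟩ := Part.mem_assert_iff.1 h
        obtain ⟨n, hn⟩ := show ∃ n, q e n = true from hmem
        have hdom : (Nat.rfind fun n => Part.some (q e n)).Dom :=
          Nat.rfind_dom.2 ⟨n, Part.mem_some_iff.2 hn.symm, fun _ => Part.some_dom _⟩
        exact (Part.mem_map_iff _).2 ⟨_, Part.get_mem hdom, rfl⟩
    · -- extensionality
      intro e
      have hK : KW (W e) ≤ Nat.size e := Nat.sInf_le ⟨e, rfl, rfl⟩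
      rw [hU (Nat.size e) (W e) ⟨e, rfl⟩ hK, hUeq]
      rw [Set.mem_setOf_eq, Set.mem_setOf_eq]
      constructor
      · rintro ⟨F, hRF, hFsub⟩
        obtain ⟨s1, hs1⟩ := (dom_iff_stg cR _).1 ((hRdom _ F).1 hRF)
        obtain ⟨s2, hs2⟩ := stages_all (Denumerable.ofNat Code e) F
          (fun x hx => (mem_W_iff e x).1 (hFsub x hx))
        refine ⟨Nat.pair (Encodable.encode F) (max s1 s2), ?_⟩
        rw [hq_def]
        simp only [Nat.unpair_pair, Denumerable.ofNat_encode, Bool.and_eq_true]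
        constructor
        · exact stg_mono (le_max_left _ _) hs1
        · rw [foldr_all_iff]
          exact fun x hx => stg_mono (le_max_right _ _) (hs2 x hx)
      · rintro ⟨n, hn⟩
        rw [hq_def] at hn
        simp only [Bool.and_eq_true] at hn
        refine ⟨Denumerable.ofNat (List ℕ) n.unpair.1, ?_, ?_⟩
        · rw [hRdom]
          rw [Denumerable.encode_ofNat]
          exact (dom_iff_stg cR _).2 ⟨n.unpair.2, hn.1⟩
        · intro x hx
          rw [foldr_all_iff] at hn
          exact (mem_W_iff e x).2 ((dom_iff_stg _ x).2 ⟨n.unpair.2, hn.2 x hx⟩)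
end

section
/- If a Markov-semidecidable set A of computable binary sequences is nonempty, then one can compute an element of A; moreover one can compute a sequence of elements of A that is dense in A. Also, nonemptiness of A is semidecidable uniformly in a c.e. index for A. -/
/-- The cylinder of binary sequences extending the finite string `u`. -/
def cyl (u : List Bool) : Set (ℕ → Bool) := {x | ∀ i : Fin u.length, x i.1 = u.get i}

/-- A uniformly effective family of open subsets of Cantor space: c.e. unions of cylinders. -/
def EffOpenCantorFamily (U : ℕ → Set (ℕ → Bool)) : Prop :=
  ∃ R : ℕ × List Bool → Prop, REPred R ∧ ∀ k, U k = {x | ∃ u, R (k, u) ∧ x ∈ cyl u}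

/-- `A` is Markov-semidecidable via the (index-invariant) set `I`:
for any program `e` of a computable sequence `x`, `x ∈ A ↔ e ∈ I`. -/
def MarkovVia (I : Set ℕ) (A : Set (ℕ → Bool)) : Prop :=
  ∀ e x, Computable x → computesSeq e x → (x ∈ A ↔ e ∈ I)

namespace Stmt5Aux

open Nat.Partrec (Code)
open Nat.Partrec.Code

noncomputable def WIn (s i z : ℕ) : Bool :=
  (evaln s (Denumerable.ofNat Code i) z).isSome

def uOf (c : ℕ) : List Bool := (Encodable.decode (α := List Bool) c).getD []

noncomputable def selfIdx (q : ℕ) : ℕ :=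
  Encodable.encode (curry (Denumerable.ofNat Code q.unpair.2) (Nat.pair q.unpair.1 q.unpair.2))

def clip (v : ℕ) : ℕ := if v = 0 then 0 else 1

noncomputable def G (q : ℕ) (n : ℕ) : Part ℕ :=
  if n < (uOf q.unpair.1.unpair.2.unpair.2).length then
    Part.some (cond ((uOf q.unpair.1.unpair.2.unpair.2).getD n false) 1 0)
  else
    (Nat.rfind fun s => Part.some (WIn s q.unpair.1.unpair.1 (selfIdx q) ||
        (evaln s (Denumerable.ofNat Code q.unpair.1.unpair.2.unpair.1) n).isSome)).map
      fun s => clip ((evaln s (Denumerable.ofNat Code q.unpair.1.unpair.2.unpair.1) n).getD 0)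

-- primrec facts
lemma prim_evaln' : Primrec fun a : ℕ × ℕ × ℕ => evaln a.1 (Denumerable.ofNat Code a.2.1) a.2.2 :=
  primrec_evaln.comp <|
    ((Primrec.fst.pair ((Primrec.ofNat Code).comp (Primrec.fst.comp Primrec.snd))).pair
      (Primrec.snd.comp Primrec.snd))

lemma prim_WIn : Primrec fun a : ℕ × ℕ × ℕ => WIn a.1 a.2.1 a.2.2 :=
  Primrec.option_isSome.comp prim_evaln'

lemma prim_uOf : Primrec uOf :=
  Primrec.option_getD.comp Primrec.decode (Primrec.const [])

lemma prim_selfIdx : Primrec selfIdx := by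
  have h2 : Primrec fun q : ℕ => q.unpair.2 := Primrec.snd.comp Primrec.unpair
  have h1 : Primrec fun q : ℕ => q.unpair.1 := Primrec.fst.comp Primrec.unpair
  exact Primrec.encode.comp <|
    primrec₂_curry.comp ((Primrec.ofNat Code).comp h2) (Primrec₂.natPair.comp h1 h2)

lemma prim_clip : Primrec clip :=
  Primrec.ite (Primrec.eq.comp Primrec.id (Primrec.const 0)) (Primrec.const 0) (Primrec.const 1)

lemma partrec_G : Partrec₂ G := by
  have hu1 : Primrec fun q : ℕ => q.unpair.1 := Primrec.fst.comp Primrec.unpair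
  have hu2 : Primrec fun q : ℕ => q.unpair.2 := Primrec.snd.comp Primrec.unpair
  -- the list from the pair
  have hu : Primrec fun a : ℕ × ℕ => uOf a.1.unpair.1.unpair.2.unpair.2 :=
    prim_uOf.comp (hu2.comp (hu2.comp (hu1.comp Primrec.fst)))
  have hq1 : Primrec fun a : ℕ × ℕ => a.1.unpair.1.unpair.1 :=
    hu1.comp (hu1.comp Primrec.fst)
  have hqe : Primrec fun a : ℕ × ℕ => a.1.unpair.1.unpair.2.unpair.1 :=
    hu1.comp (hu2.comp (hu1.comp Primrec.fst))
  have hc : Primrec fun a : ℕ × ℕ =>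
      decide (a.2 < (uOf a.1.unpair.1.unpair.2.unpair.2).length) :=
    PrimrecPred.decide (Primrec.nat_lt.comp Primrec.snd (Primrec.list_length.comp hu))
  have hthen : Computable fun a : ℕ × ℕ =>
      (cond ((uOf a.1.unpair.1.unpair.2.unpair.2).getD a.2 false) 1 0 : ℕ) :=
    (Primrec.cond ((Primrec.list_getD false).comp hu Primrec.snd)
      (Primrec.const 1) (Primrec.const 0)).to_comp
  have hb : Primrec fun b : (ℕ × ℕ) × ℕ =>
      (WIn b.2 b.1.1.unpair.1.unpair.1 (selfIdx b.1.1) ||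
        (evaln b.2 (Denumerable.ofNat Code b.1.1.unpair.1.unpair.2.unpair.1) b.1.2).isSome) :=
    Primrec.or.comp
      (prim_WIn.comp (Primrec.snd.pair ((hq1.comp Primrec.fst).pair
        ((prim_selfIdx.comp (Primrec.fst.comp Primrec.fst)).comp Primrec.id))))
      (Primrec.option_isSome.comp (prim_evaln'.comp
        (Primrec.snd.pair ((hqe.comp Primrec.fst).pair (Primrec.snd.comp Primrec.fst)))))
  have hrf : Partrec fun a : ℕ × ℕ => Nat.rfind fun s =>
      (Part.some (WIn s a.1.unpair.1.unpair.1 (selfIdx a.1) ||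
        (evaln s (Denumerable.ofNat Code a.1.unpair.1.unpair.2.unpair.1) a.2).isSome)) :=
    Partrec.rfind ((hb.to_comp.to₂).partrec₂)
  have hg : Computable₂ fun (a : ℕ × ℕ) (s : ℕ) =>
      clip ((evaln s (Denumerable.ofNat Code a.1.unpair.1.unpair.2.unpair.1) a.2).getD 0) :=
    (prim_clip.comp ((Primrec.option_getD.comp
      (prim_evaln'.comp (Primrec.snd.pair ((hqe.comp Primrec.fst).pair (Primrec.snd.comp Primrec.fst))))
      (Primrec.const 0)))).to_comp
  have helse : Partrec fun a : ℕ × ℕ =>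
      (Nat.rfind fun s => Part.some (WIn s a.1.unpair.1.unpair.1 (selfIdx a.1) ||
        (evaln s (Denumerable.ofNat Code a.1.unpair.1.unpair.2.unpair.1) a.2).isSome)).map
        fun s => clip ((evaln s (Denumerable.ofNat Code a.1.unpair.1.unpair.2.unpair.1) a.2).getD 0) :=
    hrf.map hg
  have := Partrec.cond hc.to_comp hthen.partrec helse
  exact this.of_eq fun a => by
    by_cases h : a.2 < (uOf a.1.unpair.1.unpair.2.unpair.2).length <;>
      simp [G, h]


noncomputable def FF : ℕ →. ℕ := fun m => G m.unpair.1 m.unpair.2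

lemma partrec_FF : Nat.Partrec FF := by
  have hu1 : Computable fun q : ℕ => q.unpair.1 := (Primrec.fst.comp Primrec.unpair).to_comp
  have hu2 : Computable fun q : ℕ => q.unpair.2 := (Primrec.snd.comp Primrec.unpair).to_comp
  exact Partrec.nat_iff.1 (partrec_G.comp hu1 hu2)

lemma exists_cF : ∃ c : Code, eval c = FF := exists_code.1 partrec_FF

noncomputable def cF : Code := Classical.choose exists_cF

lemma eval_cF : eval cF = FF := Classical.choose_spec exists_cF

noncomputable def ridx (p : ℕ) : ℕ :=
  Encodable.encode (curry cF (Nat.pair p (Encodable.encode cF)))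

lemma ridx_eq_selfIdx (p : ℕ) : ridx p = selfIdx (Nat.pair p (Encodable.encode cF)) := by
  simp [ridx, selfIdx, Nat.unpair_pair, Denumerable.ofNat_encode]

lemma phi_ridx (p n : ℕ) : phi (ridx p) n = G (Nat.pair p (Encodable.encode cF)) n := by
  show eval (Denumerable.ofNat Code (Encodable.encode _)) n = _
  rw [Denumerable.ofNat_encode, eval_curry, eval_cF]
  simp [FF]

lemma prim_ridx : Primrec ridx := by
  have : Primrec fun p : ℕ => Nat.pair p (Encodable.encode cF) :=
    Primrec₂.natPair.comp Primrec.id (Primrec.const _)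
  exact (funext ridx_eq_selfIdx : ridx = _) ▸ prim_selfIdx.comp this


lemma phi_ridx' (i e uc n : ℕ) :
    phi (ridx (Nat.pair i (Nat.pair e uc))) n =
      if n < (uOf uc).length then Part.some (cond ((uOf uc).getD n false) 1 0)
      else
        (Nat.rfind fun s => Part.some (WIn s i (ridx (Nat.pair i (Nat.pair e uc))) ||
            (evaln s (Denumerable.ofNat Code e) n).isSome)).map
          fun s => clip ((evaln s (Denumerable.ofNat Code e) n).getD 0) := by
  rw [phi_ridx, G]
  simp only [Nat.unpair_pair, ← ridx_eq_selfIdx]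

lemma mem_W_iff {i z : ℕ} : z ∈ W i ↔ ∃ s, WIn s i z = true := by
  change (phi i z).Dom ↔ _
  rw [Part.dom_iff_mem]
  constructor
  · rintro ⟨v, hv⟩
    obtain ⟨s, hs⟩ := evaln_complete.1 hv
    exact ⟨s, by simp [WIn, Option.isSome_iff_exists]; exact ⟨_, hs⟩⟩
  · rintro ⟨s, hs⟩
    simp only [WIn, Option.isSome_iff_exists] at hs
    obtain ⟨v, hv⟩ := hs
    exact ⟨v, evaln_sound hv⟩

lemma clip_le_one (v : ℕ) : clip v ≤ 1 := by unfold clip; split <;> simp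

lemma ridx_mem_W {i e uc : ℕ} {x : ℕ → Bool} {A : Set (ℕ → Bool)}
    (hM : MarkovVia (W i) A) (hxc : Computable x) (hx : computesSeq e x) (hxA : x ∈ A)
    (hpre : ∀ m, m < (uOf uc).length → (uOf uc).getD m false = x m) :
    ridx (Nat.pair i (Nat.pair e uc)) ∈ W i := by
  by_contra hnot
  have hW : ∀ s, WIn s i (ridx (Nat.pair i (Nat.pair e uc))) = false := by
    intro s
    by_contra h
    exact hnot (mem_W_iff.2 ⟨s, by simpa using h⟩)
  have hcs : computesSeq (ridx (Nat.pair i (Nat.pair e uc))) x := by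
    intro n
    rw [phi_ridx']
    by_cases h : n < (uOf uc).length
    · rw [if_pos h, hpre n h]
    · simp only [h, if_false]
      have hv : (cond (x n) 1 0 : ℕ) ∈ eval (Denumerable.ofNat Code e) n := by
        show _ ∈ phi e n
        rw [hx n]; exact Part.mem_some _
      obtain ⟨s0, hs0⟩ := evaln_complete.1 hv
      have hex : ∃ s, ((evaln s (Denumerable.ofNat Code e) n).isSome : Bool) = true :=
        ⟨s0, by simp [Option.isSome_iff_exists]; exact ⟨_, hs0⟩⟩
      have hmem : Nat.find hex ∈ Nat.rfind fun s =>
          Part.some (WIn s i (ridx (Nat.pair i (Nat.pair e uc))) ||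
            (evaln s (Denumerable.ofNat Code e) n).isSome) := by
        refine Nat.mem_rfind.2 ?_
        constructor
        · simp only [Part.mem_some_iff, hW, Bool.false_or]
          exact (Nat.find_spec hex).symm
        · intro k hk
          simp only [Part.mem_some_iff, hW, Bool.false_or]
          exact (Bool.eq_false_iff.2 fun hh => Nat.find_min hex hk hh).symm
      obtain ⟨w, hw⟩ := Option.isSome_iff_exists.1 (Nat.find_spec hex)
      have hweq : w = cond (x n) 1 0 := by
        have h1 : w ∈ eval (Denumerable.ofNat Code e) n := evaln_sound hw
        have h2 : eval (Denumerable.ofNat Code e) n = Part.some (cond (x n) 1 0) := hx n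
        rw [h2] at h1
        exact Part.mem_some_iff.1 h1
      refine Part.eq_some_iff.2 ?_
      refine (Part.mem_map_iff _).2 ⟨Nat.find hex, hmem, ?_⟩
      rw [hw]
      simp only [Option.getD_some, hweq]
      cases x n <;> rfl
  exact hnot ((hM _ x hxc hcs).1 hxA)

lemma exists_y {i e uc : ℕ} (hR : ridx (Nat.pair i (Nat.pair e uc)) ∈ W i) :
    ∃ y : ℕ → Bool, Computable y ∧ computesSeq (ridx (Nat.pair i (Nat.pair e uc))) y ∧
      ∀ m, m < (uOf uc).length → y m = (uOf uc).getD m false := by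
  set R := ridx (Nat.pair i (Nat.pair e uc)) with hRdef
  obtain ⟨s1, hs1⟩ := mem_W_iff.1 hR
  have htot : ∀ n, ∃ v, v ≤ 1 ∧ phi R n = Part.some v := by
    intro n
    rw [hRdef, phi_ridx']
    by_cases h : n < (uOf uc).length
    · exact ⟨cond ((uOf uc).getD n false) 1 0,
        by cases (uOf uc).getD n false <;> simp, by simp [h]⟩
    · have hex : ∃ s, (WIn s i R ||
          (evaln s (Denumerable.ofNat Code e) n).isSome) = true := ⟨s1, by simp [hs1]⟩
      have hmem : Nat.find hex ∈ Nat.rfind fun s =>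
          Part.some (WIn s i R || (evaln s (Denumerable.ofNat Code e) n).isSome) := by
        refine Nat.mem_rfind.2 ?_
        exact ⟨Part.mem_some_iff.2 (Nat.find_spec hex).symm,
          fun {k} hk => Part.mem_some_iff.2
            (Bool.eq_false_iff.2 fun hh => Nat.find_min hex hk hh).symm⟩
      refine ⟨clip ((evaln (Nat.find hex) (Denumerable.ofNat Code e) n).getD 0),
        clip_le_one _, ?_⟩
      simp only [h, if_false]
      exact Part.eq_some_iff.2 ((Part.mem_map_iff _).2 ⟨Nat.find hex, hmem, rfl⟩)
  choose vfun hle heq using htot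
  refine ⟨fun n => decide (vfun n = 1), ?_, ?_, ?_⟩
  · have hphiR : Partrec (phi R) :=
      (eval_part.comp (Computable.const (Denumerable.ofNat Code R)) Computable.id :)
    have hmap : Partrec fun n => (phi R n).map fun v => decide (v = 1) :=
      hphiR.map ((PrimrecPred.decide (Primrec.eq.comp Primrec.snd (Primrec.const 1))).to_comp).to₂
    refine hmap.of_eq_tot fun n => ?_
    rw [heq n]
    simp
  · intro n
    rw [heq n]
    have h1 := hle n
    interval_cases h : vfun n <;> simp [h]
  · intro m hm
    have h2 : phi R m = Part.some (cond ((uOf uc).getD m false) 1 0) := by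
      rw [hRdef, phi_ridx']
      rw [if_pos hm]
    have h3 := heq m
    rw [h2] at h3
    have h4 := (Part.some_inj.1 h3).symm
    cases hb : (uOf uc).getD m false <;> rw [hb] at h4 <;> simp [h4]

noncomputable def ridx2 (i k : ℕ) : ℕ :=
  ridx (Nat.pair i (Nat.pair k.unpair.1 k.unpair.2.unpair.1))

noncomputable def check (i k : ℕ) : Bool :=
  WIn k.unpair.2.unpair.2 i (ridx2 i k)

lemma prim_ridx2 : Primrec₂ ridx2 := by
  have hu1 : Primrec fun q : ℕ => q.unpair.1 := Primrec.fst.comp Primrec.unpair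
  have hu2 : Primrec fun q : ℕ => q.unpair.2 := Primrec.snd.comp Primrec.unpair
  exact prim_ridx.comp (Primrec₂.natPair.comp Primrec.fst
    (Primrec₂.natPair.comp (hu1.comp Primrec.snd) (hu1.comp (hu2.comp Primrec.snd))))

lemma prim_check : Primrec₂ check := by
  have hu2 : Primrec fun q : ℕ => q.unpair.2 := Primrec.snd.comp Primrec.unpair
  exact prim_WIn.comp ((hu2.comp (hu2.comp Primrec.snd)).pair (Primrec.fst.pair prim_ridx2))

def NN : Set ℕ := {i | ∃ k, check i k = true}

lemma re_NN : REPred (· ∈ NN) := by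
  have hp : Partrec fun i : ℕ => Nat.rfind fun k => Part.some (check i k) :=
    Partrec.rfind prim_check.to_comp.partrec₂
  refine hp.dom_re.of_eq fun i => ?_
  refine Nat.rfind_dom.trans ?_
  constructor
  · rintro ⟨n, h1, _⟩
    exact ⟨n, (Part.mem_some_iff.1 h1).symm⟩
  · rintro ⟨n, hn⟩
    exact ⟨n, Part.mem_some_iff.2 hn.symm, fun {m} _ => trivial⟩

noncomputable def dd : ℕ × ℕ →. ℕ := fun a =>
  cond (check a.1 a.2) (Part.some (ridx2 a.1 a.2))
    ((Nat.rfind fun k => Part.some (check a.1 k)).map fun k => ridx2 a.1 k)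

lemma partrec_dd : Partrec dd := by
  have hc : Computable fun a : ℕ × ℕ => check a.1 a.2 := prim_check.to_comp
  have hf : Partrec fun a : ℕ × ℕ => Part.some (ridx2 a.1 a.2) :=
    (prim_ridx2.to_comp : Computable fun a : ℕ × ℕ => ridx2 a.1 a.2).partrec
  have hbb : Primrec fun b : (ℕ × ℕ) × ℕ => check b.1.1 b.2 :=
    prim_check.comp (Primrec.fst.comp Primrec.fst) Primrec.snd
  have hrb : Primrec fun b : (ℕ × ℕ) × ℕ => ridx2 b.1.1 b.2 :=
    prim_ridx2.comp (Primrec.fst.comp Primrec.fst) Primrec.snd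
  have hg : Partrec fun a : ℕ × ℕ =>
      (Nat.rfind fun k => Part.some (check a.1 k)).map fun k => ridx2 a.1 k :=
    (Partrec.rfind hbb.to_comp.to₂.partrec₂).map hrb.to_comp.to₂
  exact Partrec.cond hc hf hg

lemma check_mem {i k : ℕ} (h : check i k = true) : ridx2 i k ∈ W i :=
  mem_W_iff.2 ⟨k.unpair.2.unpair.2, h⟩

lemma elem_of_check {i k : ℕ} {A : Set (ℕ → Bool)} (hM : MarkovVia (W i) A)
    (h : check i k = true) :
    ∃ y, Computable y ∧ computesSeq (ridx2 i k) y ∧ y ∈ A := by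
  obtain ⟨y, hyc, hys, _⟩ := exists_y (check_mem h)
  exact ⟨y, hyc, hys, (hM _ y hyc hys).2 (check_mem h)⟩

lemma exists_code_seq {x : ℕ → Bool} (hx : Computable x) : ∃ e, computesSeq e x := by
  have hg : Computable fun n => (cond (x n) 1 0 : ℕ) :=
    Computable.cond hx (Computable.const 1) (Computable.const 0)
  obtain ⟨c, hc⟩ := exists_code.1 (Partrec.nat_iff.1 hg.partrec)
  refine ⟨Encodable.encode c, fun n => ?_⟩
  show eval (Denumerable.ofNat Code (Encodable.encode c)) n = _
  rw [Denumerable.ofNat_encode, hc]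
  rfl

lemma uOf_encode (u : List Bool) : uOf (Encodable.encode u) = u := by
  simp [uOf, Encodable.encodek]

lemma check_of_W {i e uc : ℕ} (h : ridx (Nat.pair i (Nat.pair e uc)) ∈ W i) :
    ∃ s, check i (Nat.pair e (Nat.pair uc s)) = true := by
  obtain ⟨s, hs⟩ := mem_W_iff.1 h
  refine ⟨s, ?_⟩
  simpa [check, ridx2, Nat.unpair_pair] using hs

lemma nonempty_in_NN {i : ℕ} {A : Set (ℕ → Bool)} (hsub : A ⊆ {x | Computable x})
    (hM : MarkovVia (W i) A) (hne : A.Nonempty) : ∃ k, check i k = true := by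
  obtain ⟨x, hxA⟩ := hne
  have hxc : Computable x := hsub hxA
  obtain ⟨e0, he0⟩ := exists_code_seq hxc
  have hpre : ∀ m, m < (uOf (Encodable.encode ([] : List Bool))).length →
      (uOf (Encodable.encode ([] : List Bool))).getD m false = x m := by
    intro m hm
    rw [uOf_encode] at hm
    exact absurd hm (by simp)
  have hW := ridx_mem_W hM hxc he0 hxA hpre
  obtain ⟨s, hs⟩ := check_of_W hW
  exact ⟨_, hs⟩

end Stmt5Aux


open Stmt5Aux

/-- Nonemptiness of a Markov-semidecidable set is semidecidable uniformly in a c.e. index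
for it, and from such an index one can compute (indices of) a sequence of elements of `A`
that is dense in `A` (for the Cantor topology). -/
theorem stmt5 :
    ∃ (N : Set ℕ) (d : ℕ × ℕ →. ℕ), REPred (· ∈ N) ∧ Partrec d ∧
      ∀ (i : ℕ) (A : Set (ℕ → Bool)), A ⊆ {x | Computable x} → MarkovVia (W i) A →
        (A.Nonempty ↔ i ∈ N) ∧
        (A.Nonempty →
          (∀ j, ∃ e x, d (i, j) = Part.some e ∧ Computable x ∧ computesSeq e x ∧ x ∈ A) ∧
          (∀ x ∈ A, ∀ n, ∃ j e y, d (i, j) = Part.some e ∧ computesSeq e y ∧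
            ∀ m < n, y m = x m)) := by
  refine ⟨NN, dd, re_NN, partrec_dd, ?_⟩
  intro i A hsub hM
  have hiff : A.Nonempty ↔ i ∈ NN := by
    constructor
    · exact fun hne => nonempty_in_NN hsub hM hne
    · rintro ⟨k, hk⟩
      obtain ⟨y, hyc, hys, hyA⟩ := elem_of_check hM hk
      exact ⟨y, hyA⟩
  refine ⟨hiff, fun hne => ⟨?_, ?_⟩⟩
  · intro j
    have hN : ∃ k, check i k = true := hiff.1 hne
    by_cases hc : check i j = true
    · obtain ⟨y, hyc, hys, hyA⟩ := elem_of_check hM hc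
      refine ⟨ridx2 i j, y, ?_, hyc, hys, hyA⟩
      show dd (i, j) = _
      simp [dd, hc]
    · have hcf : check i j = false := Bool.eq_false_iff.2 hc
      have hmem : Nat.find hN ∈ Nat.rfind fun k => Part.some (check i k) := by
        refine Nat.mem_rfind.2 ?_
        exact ⟨Part.mem_some_iff.2 (Nat.find_spec hN).symm,
          fun {m} hm => Part.mem_some_iff.2
            (Bool.eq_false_iff.2 fun hh => Nat.find_min hN hm hh).symm⟩
      obtain ⟨y, hyc, hys, hyA⟩ := elem_of_check hM (Nat.find_spec hN)
      refine ⟨ridx2 i (Nat.find hN), y, ?_, hyc, hys, hyA⟩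
      show dd (i, j) = _
      simp only [dd, hcf, cond_false]
      exact Part.eq_some_iff.2 ((Part.mem_map_iff _).2 ⟨Nat.find hN, hmem, rfl⟩)
  · intro x hxA n
    have hxc : Computable x := hsub hxA
    obtain ⟨e0, he0⟩ := exists_code_seq hxc
    set u : List Bool := (List.range n).map x with hu
    have hlen : (uOf (Encodable.encode u)).length = n := by simp [uOf_encode, hu]
    have hgetD : ∀ m, m < (uOf (Encodable.encode u)).length →
        (uOf (Encodable.encode u)).getD m false = x m := by
      rw [uOf_encode]
      intro m hm
      rw [List.getD_eq_getElem u false hm]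
      simp [hu]
    have hW := ridx_mem_W hM hxc he0 hxA hgetD
    obtain ⟨s, hs⟩ := check_of_W hW
    set k := Nat.pair e0 (Nat.pair (Encodable.encode u) s) with hk
    obtain ⟨y, hyc, hys, hpre'⟩ := exists_y (check_mem hs)
    refine ⟨k, ridx2 i k, y, ?_, hys, ?_⟩
    · show dd (i, k) = _
      simp [dd, hs]
    · intro m hm
      have h1 : m < (uOf (k.unpair.2.unpair.1)).length := by
        simp only [hk, Nat.unpair_pair]
        omega
      rw [hpre' m h1]
      have := hgetD m (by omega)
      simpa only [hk, Nat.unpair_pair] using this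
end

section
/- Let N̄ = ℕ ∪ {∞} with topology generated by singletons {n} and the semi-lines [n,∞]. If A ⊆ N̄ is Markov-semidecidable and ∞ ∈ A, then there exists a computable order h : ℕ → ℕ (nondecreasing, unbounded, computable) such that {x ∈ ℕ : K(x) < h(x)} ⊆ A, where K(x) is the Kolmogorov complexity of the natural number x. -/
/-- Codes of the basic neighborhoods of a point of `N̄ = ℕ ∪ {∞}`: `2n` codes the singleton
`{n}` and `2m+1` codes the semi-line `[m,∞]`. -/
def nbhdCodes (x : ℕ∞) : Set ℕ :=
  {i | (∃ n : ℕ, i = 2 * n ∧ x = (n : ℕ∞)) ∨ (∃ m : ℕ, i = 2 * m + 1 ∧ (m : ℕ∞) ≤ x)}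

/-- `e` is a Markov-name of `x ∈ N̄`: `W_e` is the set of codes of basic neighborhoods of `x`. -/
def isName (e : ℕ) (x : ℕ∞) : Prop := W e = nbhdCodes x

/-- `A ⊆ N̄` is Markov-semidecidable: membership is semidecidable from any Markov-name. -/
def MarkovSemidecN (A : Set ℕ∞) : Prop :=
  ∃ I : Set ℕ, REPred (· ∈ I) ∧ ∀ e x, isName e x → (x ∈ A ↔ e ∈ I)

/-- Plain Kolmogorov complexity of a natural number. -/
noncomputable def Knat (n : ℕ) : ℕ := sInf (Nat.size '' {e | phi e 0 = Part.some n})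

/-- A computable order: a nondecreasing unbounded computable function. -/
def ComputableOrder (h : ℕ → ℕ) : Prop :=
  Computable h ∧ Monotone h ∧ ∀ m, ∃ n, m ≤ h n

open Nat.Partrec (Code)
open Nat.Partrec.Code

namespace Stmt9Aux

/-- `e` is accepted by the semidecider `c₀` within `s` steps. -/
def accB (c₀ : Code) (e s : ℕ) : Bool := (evaln s c₀ e).isSome

/-- Output of program `p` on input `0` within `k` steps. -/
def outO (p k : ℕ) : Option ℕ := evaln k (Denumerable.ofNat Code p) 0

theorem accB_prim (c₀ : Code) : Primrec₂ (accB c₀) :=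
  Primrec.option_isSome.comp
    (primrec_evaln.comp ((Primrec.snd.pair (Primrec.const c₀)).pair Primrec.fst))

theorem outO_prim : Primrec₂ outO :=
  primrec_evaln.comp ((Primrec.snd.pair ((Primrec.ofNat Code).comp Primrec.fst)).pair
    (Primrec.const 0))

/-- The enumeration condition for the self-referential names. -/
def RB (c₀ : Code) (a : (Code × ℕ) × ℕ) : Bool :=
  let i := a.1.2.unpair.2
  let e := Encodable.encode (a.1.1.curry a.1.2.unpair.1)
  let o := outO a.1.2.unpair.1 a.2
  cond (decide (i % 2 = 1))
    (cond (accB c₀ e (i / 2))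
      (o.casesOn false fun x => cond (accB c₀ e x) (decide (i / 2 ≤ x)) true)
      true)
    (o.casesOn false fun x => cond (decide (x = i / 2)) (accB c₀ e x) false)

theorem RB_prim (c₀ : Code) : Primrec fun a : (Code × ℕ) × ℕ => RB c₀ a := by
  have hn : Primrec fun a : (Code × ℕ) × ℕ => a.1.2 := Primrec.snd.comp Primrec.fst
  have hup : Primrec fun a : (Code × ℕ) × ℕ => a.1.2.unpair := Primrec.unpair.comp hn
  have hp : Primrec fun a : (Code × ℕ) × ℕ => a.1.2.unpair.1 := Primrec.fst.comp hup
  have hi : Primrec fun a : (Code × ℕ) × ℕ => a.1.2.unpair.2 := Primrec.snd.comp hup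
  have hc : Primrec fun a : (Code × ℕ) × ℕ => a.1.1 := Primrec.fst.comp Primrec.fst
  have hk : Primrec fun a : (Code × ℕ) × ℕ => a.2 := Primrec.snd
  have he : Primrec fun a : (Code × ℕ) × ℕ =>
      Encodable.encode (a.1.1.curry a.1.2.unpair.1) :=
    Primrec.encode.comp (primrec₂_curry.comp hc hp)
  have ho : Primrec fun a : (Code × ℕ) × ℕ => outO a.1.2.unpair.1 a.2 :=
    outO_prim.comp hp hk
  have hdiv : Primrec fun a : (Code × ℕ) × ℕ => a.1.2.unpair.2 / 2 :=
    Primrec.nat_div.comp hi (Primrec.const 2)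
  refine Primrec.cond (Primrec.eq.comp (Primrec.nat_mod.comp hi (Primrec.const 2))
    (Primrec.const 1)).decide ?_ ?_
  · refine Primrec.cond ((accB_prim c₀).comp he hdiv) ?_ (Primrec.const true)
    refine Primrec.option_casesOn ho (Primrec.const false) ?_
    exact (Primrec.cond ((accB_prim c₀).comp (he.comp Primrec.fst) Primrec.snd)
      (Primrec.nat_le.comp (hdiv.comp Primrec.fst) Primrec.snd).decide
      (Primrec.const true)).to₂
  · refine Primrec.option_casesOn ho (Primrec.const false) ?_
    exact (Primrec.cond (Primrec.eq.comp Primrec.snd (hdiv.comp Primrec.fst)).decide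
      ((accB_prim c₀).comp (he.comp Primrec.fst) Primrec.snd)
      (Primrec.const false)).to₂

/-- The self-referential family of partial functions. -/
def FF (c₀ : Code) : Code → ℕ →. ℕ := fun c n =>
  Nat.rfind ↑(fun k => RB c₀ ((c, n), k))

theorem FF_partrec (c₀ : Code) : Partrec₂ (FF c₀) := by
  have h : Computable₂ fun (q : Code × ℕ) (k : ℕ) => RB c₀ (q, k) :=
    ((RB_prim c₀).to_comp.comp (Computable.fst.pair Computable.snd)).to₂
  have := Partrec.rfind h.partrec₂
  exact this.of_eq fun q => by rfl

theorem exists_fix (c₀ : Code) : ∃ cs : Code, eval cs = FF c₀ cs :=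
  fixed_point₂ (FF_partrec c₀)

/-- Index of the name associated to parameter `p`. -/
def eIdx (cs : Code) (p : ℕ) : ℕ := Encodable.encode (cs.curry p)

theorem mem_W_iff (c₀ cs : Code) (hfix : eval cs = FF c₀ cs) (p i : ℕ) :
    i ∈ W (eIdx cs p) ↔ ∃ k, RB c₀ ((cs, Nat.pair p i), k) = true := by
  have h1 : phi (eIdx cs p) i = FF c₀ cs (Nat.pair p i) := by
    unfold phi eIdx
    rw [Denumerable.ofNat_encode, eval_curry, hfix]
  show (phi (eIdx cs p) i).Dom ↔ _
  rw [h1]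
  unfold FF
  rw [Nat.rfind_dom]
  constructor
  · rintro ⟨n, hn, -⟩
    exact ⟨n, by simpa using hn⟩
  · rintro ⟨k, hk⟩
    exact ⟨k, by simpa using hk, fun {m} _ => trivial⟩

theorem accB_mono {c₀ : Code} {e s s' : ℕ} (h : s ≤ s') (ha : accB c₀ e s = true) :
    accB c₀ e s' = true := by
  unfold accB at *
  rcases Option.isSome_iff_exists.1 ha with ⟨x, hx⟩
  exact Option.isSome_iff_exists.2 ⟨x, evaln_mono h hx⟩

theorem outO_phi {p k x : ℕ} (h : outO p k = some x) :
    x ∈ (Denumerable.ofNat Code p).eval 0 := evaln_sound h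

theorem RB_true_iff (c₀ cs : Code) (p i k : ℕ) :
    RB c₀ ((cs, Nat.pair p i), k) = true ↔
      (i % 2 = 1 ∧ (accB c₀ (eIdx cs p) (i / 2) = false ∨
          ∃ x, outO p k = some x ∧ (accB c₀ (eIdx cs p) x = false ∨ i / 2 ≤ x)))
      ∨ (i % 2 = 0 ∧ ∃ x, outO p k = some x ∧ x = i / 2 ∧
          accB c₀ (eIdx cs p) x = true) := by
  unfold RB eIdx
  simp only [Nat.unpair_pair]
  rcases Nat.mod_two_eq_zero_or_one i with hi | hi <;> rw [hi] <;>
    rcases ho : outO p k with _ | x <;>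
    simp only [ho, Option.casesOn'] <;>
    cases hm : accB c₀ (Encodable.encode (cs.curry p)) (i / 2) <;>
    simp [hm] <;>
    cases hx : accB c₀ (Encodable.encode (cs.curry p)) x <;> simp [hx] <;>
    (rintro rfl; simp_all)

theorem W_eq_top (c₀ cs : Code) (hfix : eval cs = FF c₀ cs) (p : ℕ)
    (hnoacc : ∀ s, accB c₀ (eIdx cs p) s = false) :
    W (eIdx cs p) = nbhdCodes ⊤ := by
  ext i
  rw [mem_W_iff c₀ cs hfix p i]
  simp only [nbhdCodes, Set.mem_setOf_eq]
  constructor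
  · rintro ⟨k, hk⟩
    rw [RB_true_iff] at hk
    rcases hk with ⟨hodd, -⟩ | ⟨heven, x, hx, hxe, hacc⟩
    · exact Or.inr ⟨i / 2, by omega, le_top⟩
    · rw [hnoacc x] at hacc; cases hacc
  · rintro (⟨n, rfl, hn⟩ | ⟨m, rfl, -⟩)
    · exact absurd hn.symm (ENat.coe_ne_top n)
    · refine ⟨0, ?_⟩
      rw [RB_true_iff]
      exact Or.inl ⟨by omega, Or.inl (hnoacc _)⟩

theorem W_eq_coe (c₀ cs : Code) (hfix : eval cs = FF c₀ cs) (p x k₀ : ℕ)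
    (hout : outO p k₀ = some x) (hacc : accB c₀ (eIdx cs p) x = true) :
    W (eIdx cs p) = nbhdCodes (x : ℕ∞) := by
  have hdet : ∀ {k y}, outO p k = some y → y = x := fun {k y} hy =>
    Part.mem_unique (outO_phi hy) (outO_phi hout)
  ext i
  rw [mem_W_iff c₀ cs hfix p i]
  simp only [nbhdCodes, Set.mem_setOf_eq]
  constructor
  · rintro ⟨k, hk⟩
    rw [RB_true_iff] at hk
    rcases hk with ⟨hodd, h⟩ | ⟨heven, y, hy, hyi, hay⟩
    · refine Or.inr ⟨i / 2, by omega, ?_⟩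
      have hle : i / 2 ≤ x := by
        rcases h with hm | ⟨y, hy, h⟩
        · by_contra hcon
          push_neg at hcon
          have := accB_mono (le_of_lt hcon) hacc
          rw [hm] at this; cases this
        · obtain rfl := hdet hy
          rcases h with hxf | hle
          · rw [hacc] at hxf; cases hxf
          · exact hle
      exact_mod_cast hle
    · have hyx := hdet hy
      refine Or.inl ⟨x, by omega, rfl⟩
  · rintro (⟨n, rfl, hn⟩ | ⟨m, rfl, hm⟩)
    · have hxn : x = n := by exact_mod_cast hn
      refine ⟨k₀, ?_⟩
      rw [RB_true_iff]
      exact Or.inr ⟨by omega, x, hout, by omega, hacc⟩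
    · have hmx : m ≤ x := by exact_mod_cast hm
      refine ⟨k₀, ?_⟩
      rw [RB_true_iff]
      exact Or.inl ⟨by omega, Or.inr ⟨x, hout, Or.inr (by omega)⟩⟩

theorem findGreatest_eq_rec (B : ℕ → Bool) (b : ℕ) :
    Nat.findGreatest (fun n => B n = true) b =
      Nat.rec (motive := fun _ => ℕ) 0 (fun y IH => cond (B (y + 1)) (y + 1) IH) b := by
  induction b with
  | zero => rfl
  | succ b ih =>
    rw [Nat.findGreatest_succ]
    cases hB : B (b + 1) <;> simp [hB, ih]

theorem comp_findGreatest {α} [Primcodable α] {B : α → ℕ → Bool} (hB : Computable₂ B) :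
    Computable₂ fun a b => Nat.findGreatest (fun n => B a n = true) b := by
  have hh : Computable₂ fun (q : α × ℕ) (yIH : ℕ × ℕ) =>
      cond (B q.1 (yIH.1 + 1)) (yIH.1 + 1) yIH.2 :=
    (Computable.cond
      (hB.comp (Computable.fst.comp Computable.fst)
        (Computable.succ.comp (Computable.fst.comp Computable.snd)))
      (Computable.succ.comp (Computable.fst.comp Computable.snd))
      (Computable.snd.comp Computable.snd)).to₂
  have h := Computable.nat_rec (f := fun q : α × ℕ => q.2) (g := fun _ : α × ℕ => (0 : ℕ))
    (h := fun (q : α × ℕ) (yIH : ℕ × ℕ) => cond (B q.1 (yIH.1 + 1)) (yIH.1 + 1) yIH.2)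
    Computable.snd (Computable.const 0) hh
  exact h.of_eq fun q => (findGreatest_eq_rec (B q.1) q.2).symm

theorem fG_mono {P Q : ℕ → Prop} [DecidablePred P] [DecidablePred Q]
    (h : ∀ n, P n → Q n) {a b : ℕ} (hab : a ≤ b) :
    Nat.findGreatest P a ≤ Nat.findGreatest Q b := by
  rcases Nat.eq_zero_or_pos (Nat.findGreatest P a) with h0 | h0
  · omega
  · have hP : P (Nat.findGreatest P a) :=
      (Nat.findGreatest_eq_iff.1 rfl).2.1 (Nat.pos_iff_ne_zero.1 h0)
    exact Nat.le_findGreatest (le_trans (Nat.findGreatest_le a) hab) (h _ hP)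

end Stmt9Aux

open Stmt9Aux

/-- If `A ⊆ N̄` is Markov-semidecidable and `∞ ∈ A`, then `A` contains a Friedberg set
`{x ∈ ℕ : K(x) < h(x)}` for some computable order `h`. -/
theorem stmt9 (A : Set ℕ∞) (hA : MarkovSemidecN A) (hinf : (⊤ : ℕ∞) ∈ A) :
    ∃ h : ℕ → ℕ, ComputableOrder h ∧ ∀ x : ℕ, Knat x < h x → (x : ℕ∞) ∈ A := by
  classical
  obtain ⟨I, hI, hname⟩ := hA
  -- a code `c₀` whose halting set is `I`
  have hF : Partrec fun a => (Part.assert (a ∈ I) fun _ => Part.some ()).map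
      fun _ => (0 : ℕ) := hI.map ((Computable.const 0).comp Computable.fst).to₂
  obtain ⟨c₀, hc₀⟩ := exists_code.1 (Partrec.nat_iff.1 hF)
  have hIdom : ∀ a, a ∈ I ↔ ∃ s, accB c₀ a s = true := by
    intro a
    have h1 : (eval c₀ a).Dom ↔ a ∈ I := by
      rw [hc₀]; simp [Part.assert]
    rw [← h1]
    constructor
    · intro h
      obtain ⟨y, hy⟩ := Part.dom_iff_mem.1 h
      obtain ⟨k, hk⟩ := evaln_complete.1 hy
      exact ⟨k, Option.isSome_iff_exists.2 ⟨y, hk⟩⟩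
    · rintro ⟨s, hs⟩
      obtain ⟨y, hy⟩ := Option.isSome_iff_exists.1 hs
      exact Part.dom_iff_mem.2 ⟨y, evaln_sound hy⟩
  obtain ⟨cs, hfix⟩ := exists_fix c₀
  -- the names are all eventually accepted
  have htot : ∀ p, ∃ s, accB c₀ (eIdx cs p) s = true := by
    intro p
    by_contra hno
    push_neg at hno
    have hnoacc : ∀ s, accB c₀ (eIdx cs p) s = false := by
      intro s
      have := hno s
      revert this
      cases accB c₀ (eIdx cs p) s <;> simp
    have hnm : isName (eIdx cs p) ⊤ := W_eq_top c₀ cs hfix p hnoacc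
    have hin := (hname _ _ hnm).1 hinf
    obtain ⟨s, hs⟩ := (hIdom _).1 hin
    rw [hnoacc s] at hs; cases hs
  -- the total computable acceptance-time function
  set t : ℕ → ℕ := fun p => Nat.find (htot p) with ht_def
  have hacccomp : Computable₂ fun (p s : ℕ) => accB c₀ (eIdx cs p) s :=
    ((accB_prim c₀).comp
      (Primrec.encode.comp (primrec₂_curry.comp (Primrec.const cs) Primrec.fst))
      Primrec.snd).to_comp.to₂
  have htc : Computable t := by
    have hpr : Partrec fun p => Nat.rfind ↑(fun s => accB c₀ (eIdx cs p) s) :=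
      Partrec.rfind hacccomp.partrec₂
    apply hpr.of_eq_tot
    intro p
    apply Nat.mem_rfind.2
    constructor
    · simpa using (Nat.find_spec (htot p)).symm
    · intro m hm
      have := Nat.find_min (htot p) hm
      show false ∈ Part.some (accB c₀ (eIdx cs p) m)
      rw [Part.mem_some_iff]
      revert this
      cases accB c₀ (eIdx cs p) m <;> simp
  -- the key fact: fast enough outputs are in `A`
  have hkey : ∀ p x : ℕ, phi p 0 = Part.some x → t p ≤ x → (x : ℕ∞) ∈ A := by
    intro p x hpx htx
    have hax : accB c₀ (eIdx cs p) x = true := accB_mono htx (Nat.find_spec (htot p))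
    have hex : x ∈ (Denumerable.ofNat Code p).eval 0 := by
      show x ∈ phi p 0
      rw [hpx]; exact Part.mem_some x
    obtain ⟨k₀, hk₀⟩ := evaln_complete.1 hex
    have hnm : isName (eIdx cs p) (x : ℕ∞) := W_eq_coe c₀ cs hfix p x k₀ hk₀ hax
    exact (hname _ _ hnm).2 ((hIdom _).2 ⟨t p, Nat.find_spec (htot p)⟩)
  -- bounded check of the acceptance times
  set B : ℕ → ℕ → Bool := fun x N => Nat.rec (motive := fun _ => Bool)
    (decide (t 0 ≤ x)) (fun y IH => cond IH (decide (t (y + 1) ≤ x)) false) N with hB_def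
  have hBiff : ∀ x N, B x N = true ↔ ∀ p ≤ N, t p ≤ x := by
    intro x N
    induction N with
    | zero =>
      show decide (t 0 ≤ x) = true ↔ _
      rw [decide_eq_true_eq]
      constructor
      · intro h p hp
        have hp0 : p = 0 := Nat.le_zero.1 hp
        rw [hp0]; exact h
      · intro h; exact h 0 le_rfl
    | succ N ih =>
      show cond (B x N) (decide (t (N + 1) ≤ x)) false = true ↔ _
      constructor
      · intro h
        cases hbn : B x N with
        | false => rw [hbn] at h; cases h
        | true =>
          rw [hbn] at h
          simp only [cond_true, decide_eq_true_eq] at h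
          intro p hp
          by_cases hpe : p = N + 1
          · rw [hpe]; exact h
          · exact (ih.1 hbn) p (by omega)
      · intro h
        have h1 : B x N = true := ih.2 fun p hp => h p (le_trans hp (Nat.le_succ N))
        rw [h1]
        simpa using h (N + 1) le_rfl
  have hBcomp : Computable₂ B := by
    have hle : Computable₂ fun a b : ℕ => decide (a ≤ b) := Primrec.nat_le.decide.to_comp
    have hh : Computable₂ fun (q : ℕ × ℕ) (yIH : ℕ × Bool) =>
        cond yIH.2 (decide (t (yIH.1 + 1) ≤ q.1)) false :=
      (Computable.cond (Computable.snd.comp Computable.snd)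
        (hle.comp (htc.comp (Computable.succ.comp (Computable.fst.comp Computable.snd)))
          (Computable.fst.comp Computable.fst))
        (Computable.const false)).to₂
    have h := Computable.nat_rec (f := fun q : ℕ × ℕ => q.2)
      (g := fun q : ℕ × ℕ => decide (t 0 ≤ q.1))
      (h := fun (q : ℕ × ℕ) (yIH : ℕ × Bool) =>
        cond yIH.2 (decide (t (yIH.1 + 1) ≤ q.1)) false)
      Computable.snd (hle.comp (htc.comp (Computable.const 0)) Computable.fst) hh
    exact h.of_eq fun q => rfl
  set fG : ℕ → ℕ := fun x => Nat.findGreatest (fun N => B x N = true) x with hfG_def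
  set sz : ℕ → ℕ := fun N => Nat.findGreatest (fun k => decide (2 ^ k ≤ N) = true) N
    with hsz_def
  have hszB : Computable₂ fun (N k : ℕ) => decide (2 ^ k ≤ N) := by
    have hpow : Primrec₂ fun a b : ℕ => a ^ b := Primrec₂.unpaired'.mp Nat.Primrec.pow
    exact (Primrec.nat_le.comp (hpow.comp (Primrec.const 2) Primrec.snd)
      Primrec.fst).decide.to_comp.to₂
  have hfGcomp : Computable fG := (comp_findGreatest hBcomp).comp Computable.id Computable.id
  have hszcomp : Computable sz := (comp_findGreatest hszB).comp Computable.id Computable.id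
  refine ⟨fun x => sz (fG x), ⟨hszcomp.comp hfGcomp, ?_, ?_⟩, ?_⟩
  · -- monotone
    intro a b hab
    have hfg : fG a ≤ fG b := by
      apply fG_mono _ hab
      intro N hN
      exact (hBiff b N).2 fun p hp => le_trans ((hBiff a N).1 hN p hp) hab
    apply fG_mono _ hfg
    intro k hk
    simp only [decide_eq_true_eq] at hk ⊢
    omega
  · -- unbounded
    intro m
    refine ⟨max (2 ^ m) ((Finset.range (2 ^ m + 1)).sup t), ?_⟩
    set x := max (2 ^ m) ((Finset.range (2 ^ m + 1)).sup t) with hx_def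
    have hQ : B x (2 ^ m) = true := (hBiff x _).2 fun p hp =>
      le_trans (Finset.le_sup (Finset.mem_range.2 (by omega))) (le_max_right _ _)
    have h1 : 2 ^ m ≤ fG x := Nat.le_findGreatest (le_max_left _ _) hQ
    have h2 : m ≤ sz (2 ^ m) :=
      Nat.le_findGreatest (le_of_lt (Nat.lt_two_pow_self (n := m))) (by simp)
    refine le_trans h2 ?_
    apply fG_mono _ h1
    intro k hk
    simp only [decide_eq_true_eq] at hk ⊢
    omega
  · -- the Friedberg set is contained in A
    intro x hx
    have hx' : Knat x < sz (fG x) := hx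
    have hne : {e | phi e 0 = Part.some x}.Nonempty := by
      refine ⟨Encodable.encode (Code.const x), ?_⟩
      show phi _ 0 = Part.some x
      unfold phi
      rw [Denumerable.ofNat_encode, eval_const]
    obtain ⟨p, hp, hps⟩ := Nat.sInf_mem (hne.image Nat.size)
    have hps' : Nat.size p = Knat x := hps
    have hhx : sz (fG x) ≠ 0 := by omega
    have hP' : 2 ^ sz (fG x) ≤ fG x := by
      have hP := (Nat.findGreatest_eq_iff.1 (rfl : sz (fG x) = sz (fG x))).2.1 hhx
      simpa using hP
    have hpsize : Nat.size p < sz (fG x) := by omega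
    have hplt : p < 2 ^ sz (fG x) := Nat.size_le.1 (le_of_lt hpsize)
    have hpfg : p ≤ fG x := le_trans (le_of_lt hplt) hP'
    have hfgne : fG x ≠ 0 := by
      intro h0
      rw [h0] at hP'
      have := Nat.one_le_two_pow (n := sz 0)
      omega
    have hBfg : B x (fG x) = true :=
      (Nat.findGreatest_eq_iff.1 (rfl : fG x = fG x)).2.1 hfgne
    exact hkey p x hp ((hBiff x (fG x)).1 hBfg p hpfg)
end

section
/- On N̄ = ℕ ∪ {∞}, the Ershov topology (the topology generated by all Markov-semidecidable sets) is generated by the singletons {n} for n ∈ ℕ together with the Friedberg sets {x ∈ N̄ : K(x) < h(x)} for computable orders h (extending h to ∞ by h(∞) = ∞ and interpreting K(∞) via Kolmogorov complexity of the point ∞). -/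
/-- The Friedberg set of a computable order `h` (with `h(∞) = ∞`, so that `∞` always
belongs, since `K(∞)` is finite). -/
def FriedSet (h : ℕ → ℕ) : Set ℕ∞ :=
  {x | x = ⊤ ∨ ∃ n : ℕ, x = (n : ℕ∞) ∧ Knat n < h n}

open Nat.Partrec (Code)
open Nat.Partrec.Code

lemma phi_encode (c : Code) : phi (Encodable.encode c) = c.eval := by
  simp [phi]

lemma mem_W_iff {e i : ℕ} :
    i ∈ W e ↔ ∃ s, (evaln s (Denumerable.ofNat Code e) i).isSome = true := by
  have : i ∈ W e ↔ ∃ a, a ∈ phi e i := by simp [W, Part.dom_iff_mem]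
  rw [this]
  constructor
  · rintro ⟨a, ha⟩
    obtain ⟨s, hs⟩ := evaln_complete.1 ha
    exact ⟨s, by simp [Option.isSome_iff_exists]; exact ⟨a, hs⟩⟩
  · rintro ⟨s, hs⟩
    obtain ⟨a, ha⟩ := Option.isSome_iff_exists.1 hs
    exact ⟨a, evaln_sound ha⟩

lemma rePred_exists {D : ℕ → ℕ → Bool} (hD : Computable₂ D) :
    REPred fun e => ∃ w, D e w = true := by
  have h1 : Partrec fun e => Nat.rfind fun w => (Part.some (D e w) : Part Bool) := by
    apply Partrec.rfind
    exact hD.partrec₂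
  have h2 : Partrec fun e => (Nat.rfind fun w => (Part.some (D e w) : Part Bool)).map
      (fun _ => ()) := h1.map ((Computable.const ()).comp Computable.fst).to₂
  apply h2.of_eq
  intro e
  apply Part.ext
  intro u
  simp only [Part.mem_map_iff, Part.mem_assert_iff]
  constructor
  · rintro ⟨n, hn, -⟩
    have := Nat.rfind_spec hn
    simp at this
    exact ⟨⟨n, this⟩, by simp⟩
  · rintro ⟨⟨n, hn⟩, hu⟩
    have hdom : (Nat.rfind fun w => (Part.some (D e w) : Part Bool)).Dom := by
      apply Nat.rfind_dom.2
      exact ⟨n, by simpa using hn, fun {m} _ => trivial⟩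
    refine ⟨(Nat.rfind _).get hdom, Part.get_mem hdom, ?_⟩
    simp

lemma mem_nbhdCodes_coe {n i : ℕ} :
    i ∈ nbhdCodes (n : ℕ∞) ↔ i = 2 * n ∨ ∃ m ≤ n, i = 2 * m + 1 := by
  simp only [nbhdCodes, Set.mem_setOf_eq, Nat.cast_inj, Nat.cast_le]
  constructor
  · rintro (⟨m, rfl, rfl⟩ | ⟨m, rfl, hm⟩)
    · exact Or.inl rfl
    · exact Or.inr ⟨m, hm, rfl⟩
  · rintro (rfl | ⟨m, hm, rfl⟩)
    · exact Or.inl ⟨n, rfl, rfl⟩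
    · exact Or.inr ⟨m, rfl, hm⟩

lemma mem_nbhdCodes_top {i : ℕ} : i ∈ nbhdCodes ⊤ ↔ ∃ m, i = 2 * m + 1 := by
  simp only [nbhdCodes, Set.mem_setOf_eq, le_top, and_true]
  constructor
  · rintro (⟨m, rfl, h⟩ | ⟨m, rfl⟩)
    · exact absurd h (ne_of_lt (WithTop.coe_lt_top m)).symm
    · exact ⟨m, rfl⟩
  · rintro ⟨m, rfl⟩
    exact Or.inr ⟨m, rfl⟩

lemma KnatSet_nonempty (n : ℕ) : {e | phi e 0 = Part.some n}.Nonempty := by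
  refine ⟨Encodable.encode (Code.const n), ?_⟩
  simp [Set.mem_setOf_eq, phi_encode, eval_const]

lemma Knat_le {n e : ℕ} (h : phi e 0 = Part.some n) : Knat n ≤ Nat.size e :=
  Nat.sInf_le ⟨e, h, rfl⟩

lemma exists_of_Knat_lt {n c : ℕ} (h : Knat n < c) :
    ∃ e, phi e 0 = Part.some n ∧ Nat.size e < c := by
  have hne : (Nat.size '' {e | phi e 0 = Part.some n}).Nonempty :=
    (KnatSet_nonempty n).image _
  obtain ⟨e, he, hs⟩ := Nat.sInf_mem hne
  exact ⟨e, he, hs ▸ h⟩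

lemma primrec_evaln_isSome {α} [Primcodable α] {s e i : α → ℕ} (hs : Primrec s)
    (he : Primrec e) (hi : Primrec i) :
    Primrec fun a => (evaln (s a) (Denumerable.ofNat Code (e a)) (i a)).isSome :=
  Primrec.option_isSome.comp
    (primrec_evaln.comp ((hs.pair ((Primrec.ofNat Code).comp he)).pair hi))

theorem markov_singleton (n : ℕ) : MarkovSemidecN {(n : ℕ∞)} := by
  refine ⟨{e | 2 * n ∈ W e}, ?_, ?_⟩
  · have hD : Computable₂ (fun e s => (evaln s (Denumerable.ofNat Code e) (2 * n)).isSome) :=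
      Primrec₂.to_comp (primrec_evaln_isSome Primrec.snd Primrec.fst (Primrec.const (2 * n)))
    exact (rePred_exists hD).of_eq fun e => mem_W_iff.symm
  · intro e x hx
    have h2 : 2 * n ∈ W e ↔ 2 * n ∈ nbhdCodes x := by rw [hx]
    show x ∈ _ ↔ 2 * n ∈ W e
    rw [Set.mem_singleton_iff, h2]
    constructor
    · rintro rfl
      exact Or.inl ⟨n, rfl, rfl⟩
    · intro hw
      rcases hw with ⟨m, hm, rfl⟩ | ⟨m, hm, _⟩
      · have : m = n := by omega
        rw [this]
      · omega



lemma even_mem_nbhdCodes {n : ℕ} {x : ℕ∞} : 2 * n ∈ nbhdCodes x ↔ x = (n : ℕ∞) := by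
  constructor
  · rintro (⟨k, hk, rfl⟩ | ⟨m, hm, _⟩)
    · have : k = n := by omega
      rw [this]
    · omega
  · rintro rfl
    exact Or.inl ⟨n, rfl, rfl⟩

lemma odd_mem_nbhdCodes {m : ℕ} {x : ℕ∞} : 2 * m + 1 ∈ nbhdCodes x ↔ (m : ℕ∞) ≤ x := by
  constructor
  · rintro (⟨k, hk, _⟩ | ⟨k, hk, hle⟩)
    · omega
    · have : k = m := by omega
      rwa [this] at hle
  · intro hle
    exact Or.inr ⟨m, rfl, hle⟩

lemma size_lt_iff {x c : ℕ} : Nat.size x < c ↔ 0 < c ∧ x < 2 ^ (c - 1) := by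
  cases c with
  | zero => simp
  | succ k => simp [Nat.lt_succ_iff, Nat.size_le]

def extract (e : ℕ) : Part ℕ :=
  Nat.rfindOpt fun t =>
    (evaln t.unpair.1 (Denumerable.ofNat Code e) (2 * t.unpair.2)).map fun _ => t.unpair.2

lemma extract_partrec : Partrec extract := by
  apply Partrec.rfindOpt
  apply Primrec₂.to_comp
  have h1 : Primrec fun p : ℕ × ℕ =>
      evaln p.2.unpair.1 (Denumerable.ofNat Code p.1) (2 * p.2.unpair.2) :=
    primrec_evaln.comp
      (((Primrec.fst.comp (Primrec.unpair.comp Primrec.snd)).pair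
        ((Primrec.ofNat Code).comp Primrec.fst)).pair
        (Primrec.nat_mul.comp (Primrec.const 2)
          (Primrec.snd.comp (Primrec.unpair.comp Primrec.snd))))
  exact h1.option_map
    ((Primrec.snd.comp (Primrec.unpair.comp (Primrec.snd.comp Primrec.fst))).to₂)

lemma extract_eq {e n : ℕ} (hx : isName e ((n : ℕ∞))) : extract e = Part.some n := by
  have hW : ∀ i, i ∈ W e ↔ i ∈ nbhdCodes (n : ℕ∞) := fun i => by rw [hx]
  have h2n : 2 * n ∈ W e := (hW _).2 (even_mem_nbhdCodes.2 rfl)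
  obtain ⟨s, hs⟩ := mem_W_iff.1 h2n
  rw [Part.eq_some_iff]
  have hdom : (extract e).Dom := by
    rw [extract, Nat.rfindOpt_dom]
    obtain ⟨a, ha⟩ := Option.isSome_iff_exists.1 hs
    refine ⟨Nat.pair s n, n, ?_⟩
    simp only [Nat.unpair_pair, Option.mem_map]
    exact ⟨a, ha, by simp⟩
  obtain ⟨a, ha⟩ := Part.dom_iff_mem.1 hdom
  obtain ⟨t, ht⟩ := Nat.rfindOpt_spec ha
  rw [Option.mem_map] at ht
  obtain ⟨b, hb, hba⟩ := ht
  have hmem : 2 * t.unpair.2 ∈ W e := by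
    rw [mem_W_iff]
    exact ⟨t.unpair.1, Option.isSome_iff_exists.2 ⟨b, hb⟩⟩
  have hxeq : (n : ℕ∞) = (t.unpair.2 : ℕ∞) := even_mem_nbhdCodes.1 ((hW _).1 hmem)
  have h2 : t.unpair.2 = n := (Nat.cast_inj.1 hxeq).symm
  rw [← hba, h2] at ha
  exact ha

lemma exists_B : ∃ B : ℕ → ℕ, Primrec B ∧ ∀ e, phi (B e) 0 = extract e := by
  have h1 : Partrec fun q : ℕ => extract q.unpair.1 :=
    extract_partrec.comp (Primrec.fst.comp Primrec.unpair).to_comp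
  obtain ⟨c2, hc2⟩ := exists_code.1 (Partrec.nat_iff.1 h1)
  refine ⟨fun e => Encodable.encode (curry c2 e),
    Primrec.encode.comp (primrec₂_curry.comp (Primrec.const c2) Primrec.id), fun e => ?_⟩
  show (Denumerable.ofNat Code _).eval 0 = _
  rw [Denumerable.ofNat_encode, eval_curry, hc2]
  simp

theorem markov_friedSet {h : ℕ → ℕ} (hc : ComputableOrder h) : MarkovSemidecN (FriedSet h) := by
  obtain ⟨hcomp, hmono, hunb⟩ := hc
  obtain ⟨B, hB, hBe⟩ := exists_B
  classical
  set D : ℕ → ℕ → Bool := fun e w =>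
    (decide (0 < h w.unpair.1) && decide (B e < 2 ^ (h w.unpair.1 - 1)) &&
      (evaln w.unpair.2 (Denumerable.ofNat Code e) (2 * w.unpair.1 + 1)).isSome) ||
    ((evaln w.unpair.2.unpair.1 (Denumerable.ofNat Code e) (2 * w.unpair.1)).isSome &&
      decide (0 < h w.unpair.1) &&
      decide (w.unpair.2.unpair.2.unpair.1 < 2 ^ (h w.unpair.1 - 1)) &&
      decide (evaln w.unpair.2.unpair.2.unpair.2
        (Denumerable.ofNat Code w.unpair.2.unpair.2.unpair.1) 0 = some w.unpair.1)) with hDdef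
  have hDcomp : Computable₂ D := by
    have band : Computable₂ (· && · : Bool → Bool → Bool) := (Primrec.dom_bool₂ _).to_comp
    have bor : Computable₂ (· || · : Bool → Bool → Bool) := (Primrec.dom_bool₂ _).to_comp
    have hu1 : Computable fun p : ℕ × ℕ => p.2.unpair.1 :=
      (Primrec.fst.comp (Primrec.unpair.comp Primrec.snd)).to_comp
    have hu2 : Computable fun p : ℕ × ℕ => p.2.unpair.2 :=
      (Primrec.snd.comp (Primrec.unpair.comp Primrec.snd)).to_comp
    have hu21 : Computable fun p : ℕ × ℕ => p.2.unpair.2.unpair.1 :=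
      (Primrec.fst.comp (Primrec.unpair.comp
        (Primrec.snd.comp (Primrec.unpair.comp Primrec.snd)))).to_comp
    have hu221 : Computable fun p : ℕ × ℕ => p.2.unpair.2.unpair.2.unpair.1 :=
      (Primrec.fst.comp (Primrec.unpair.comp (Primrec.snd.comp (Primrec.unpair.comp
        (Primrec.snd.comp (Primrec.unpair.comp Primrec.snd)))))).to_comp
    have hu222 : Computable fun p : ℕ × ℕ => p.2.unpair.2.unpair.2.unpair.2 :=
      (Primrec.snd.comp (Primrec.unpair.comp (Primrec.snd.comp (Primrec.unpair.comp
        (Primrec.snd.comp (Primrec.unpair.comp Primrec.snd)))))).to_comp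
    have hhm : Computable fun p : ℕ × ℕ => h p.2.unpair.1 := hcomp.comp hu1
    have hpow : Computable fun p : ℕ × ℕ => 2 ^ (h p.2.unpair.1 - 1) :=
      (Primrec₂.unpaired'.1 Nat.Primrec.pow).to_comp.comp (Computable.const 2)
        (Primrec.nat_sub.to_comp.comp hhm (Computable.const 1))
    have hb1 : Computable fun p : ℕ × ℕ => decide (0 < h p.2.unpair.1) :=
      Primrec.nat_lt.decide.to_comp.comp (Computable.const 0) hhm
    have hb2 : Computable fun p : ℕ × ℕ => decide (B p.1 < 2 ^ (h p.2.unpair.1 - 1)) :=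
      Primrec.nat_lt.decide.to_comp.comp (hB.to_comp.comp Computable.fst) hpow
    have hev : ∀ {s i : ℕ × ℕ → ℕ} {c : ℕ × ℕ → ℕ}, Computable s → Computable c →
        Computable i →
        Computable fun p : ℕ × ℕ => evaln (s p) (Denumerable.ofNat Code (c p)) (i p) := by
      intro s i c hs hc hi
      exact primrec_evaln.to_comp.comp
        ((hs.pair ((Primrec.ofNat Code).to_comp.comp hc)).pair hi)
    have hb3 : Computable fun p : ℕ × ℕ =>
        (evaln p.2.unpair.2 (Denumerable.ofNat Code p.1) (2 * p.2.unpair.1 + 1)).isSome :=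
      Primrec.option_isSome.to_comp.comp
        (hev hu2 Computable.fst
          (Primrec.to_comp (Primrec.nat_add.comp
            (Primrec.nat_mul.comp (Primrec.const 2)
              (Primrec.fst.comp (Primrec.unpair.comp Primrec.snd))) (Primrec.const 1))))
    have hb4 : Computable fun p : ℕ × ℕ =>
        (evaln p.2.unpair.2.unpair.1 (Denumerable.ofNat Code p.1) (2 * p.2.unpair.1)).isSome :=
      Primrec.option_isSome.to_comp.comp
        (hev hu21 Computable.fst
          (Primrec.to_comp (Primrec.nat_mul.comp (Primrec.const 2)
            (Primrec.fst.comp (Primrec.unpair.comp Primrec.snd)))))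
    have hb5 : Computable fun p : ℕ × ℕ =>
        decide (evaln p.2.unpair.2.unpair.2.unpair.2
          (Denumerable.ofNat Code p.2.unpair.2.unpair.2.unpair.1) 0 = some p.2.unpair.1) :=
      Primrec.eq.decide.to_comp.comp (hev hu222 hu221 (Computable.const 0))
        (Computable.option_some.comp hu1)
    exact bor.comp (band.comp (band.comp hb1 hb2) hb3)
      (band.comp (band.comp (band.comp hb4 hb1)
        (Primrec.nat_lt.decide.to_comp.comp hu221 hpow)) hb5)
  refine ⟨{e | ∃ w, D e w = true}, (rePred_exists hDcomp).of_eq fun e => Iff.rfl, ?_⟩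
  intro e x hx
  show x ∈ FriedSet h ↔ ∃ w, D e w = true
  constructor
  · rintro (rfl | ⟨n, rfl, hKn⟩)
    · obtain ⟨m, hm⟩ := hunb (Nat.size (B e) + 1)
      have h0 : 0 < h m := by omega
      have hlt : B e < 2 ^ (h m - 1) := (size_lt_iff.1 (by omega)).2
      have hodd : 2 * m + 1 ∈ W e := by
        have : (2 * m + 1) ∈ nbhdCodes (⊤ : ℕ∞) := odd_mem_nbhdCodes.2 le_top
        rwa [hx]
      obtain ⟨s, hs⟩ := mem_W_iff.1 hodd
      refine ⟨Nat.pair m s, ?_⟩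
      simp only [hDdef, Nat.unpair_pair, Bool.or_eq_true, Bool.and_eq_true,
        decide_eq_true_eq]
      exact Or.inl ⟨⟨h0, hlt⟩, hs⟩
    · obtain ⟨p, hp0, hps⟩ := exists_of_Knat_lt hKn
      have h0 : 0 < h n := by omega
      have hplt : p < 2 ^ (h n - 1) := (size_lt_iff.1 hps).2
      have heven : 2 * n ∈ W e := by
        have : (2 * n) ∈ nbhdCodes ((n : ℕ∞)) := even_mem_nbhdCodes.2 rfl
        rwa [hx]
      obtain ⟨s, hs⟩ := mem_W_iff.1 heven
      obtain ⟨t, ht⟩ := evaln_complete.1 (show n ∈ phi p 0 by rw [hp0]; exact Part.mem_some n)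
      refine ⟨Nat.pair n (Nat.pair s (Nat.pair p t)), ?_⟩
      simp only [hDdef, Nat.unpair_pair, Bool.or_eq_true, Bool.and_eq_true,
        decide_eq_true_eq]
      exact Or.inr ⟨⟨⟨hs, h0⟩, hplt⟩, ht⟩
  · rintro ⟨w, hw⟩
    simp only [hDdef, Bool.or_eq_true, Bool.and_eq_true, decide_eq_true_eq] at hw
    rcases hw with ⟨⟨h0, hlt⟩, hs⟩ | ⟨⟨⟨hs, h0⟩, hplt⟩, ht⟩
    · have hodd : 2 * w.unpair.1 + 1 ∈ W e := mem_W_iff.2 ⟨w.unpair.2, hs⟩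
      rw [hx] at hodd
      have hle : ((w.unpair.1 : ℕ∞)) ≤ x := odd_mem_nbhdCodes.1 hodd
      induction x using ENat.recTopCoe with
      | top => exact Or.inl rfl
      | coe n =>
        right
        refine ⟨n, rfl, ?_⟩
        have hmn : w.unpair.1 ≤ n := Nat.cast_le.1 hle
        have hex : extract e = Part.some n := extract_eq hx
        have hKle : Knat n ≤ Nat.size (B e) := Knat_le (by rw [hBe, hex])
        have hsz : Nat.size (B e) < h w.unpair.1 := size_lt_iff.2 ⟨h0, hlt⟩
        exact lt_of_le_of_lt hKle (lt_of_lt_of_le hsz (hmono hmn))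
    · have heven : 2 * w.unpair.1 ∈ W e := mem_W_iff.2 ⟨w.unpair.2.unpair.1, hs⟩
      rw [hx] at heven
      have hxn : x = (w.unpair.1 : ℕ∞) := even_mem_nbhdCodes.1 heven
      right
      refine ⟨w.unpair.1, hxn, ?_⟩
      have hphi : phi w.unpair.2.unpair.2.unpair.1 0 = Part.some w.unpair.1 :=
        Part.eq_some_iff.2 (evaln_sound ht)
      have hK : Knat w.unpair.1 ≤ Nat.size w.unpair.2.unpair.2.unpair.1 := Knat_le hphi
      have : Nat.size w.unpair.2.unpair.2.unpair.1 < h w.unpair.1 :=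
        size_lt_iff.2 ⟨h0, hplt⟩
      omega



lemma exists_cI {I : Set ℕ} (hI : REPred (· ∈ I)) :
    ∃ cI : Code, ∀ e, e ∈ I ↔ ∃ s, (evaln s cI e).isSome = true := by
  have h1 : Partrec fun e => (Part.assert (e ∈ I) fun _ => Part.some ()).map fun _ => (0 : ℕ) :=
    hI.map ((Computable.const 0).comp Computable.fst).to₂
  obtain ⟨c, hc⟩ := exists_code.1 (Partrec.nat_iff.1 h1)
  refine ⟨c, fun e => ?_⟩
  have h2 : e ∈ I ↔ ∃ a, a ∈ c.eval e := by
    rw [hc]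
    constructor
    · intro he
      exact ⟨0, Part.mem_map _ (Part.mem_assert he (Part.mem_some ()))⟩
    · rintro ⟨a, ha⟩
      obtain ⟨u, hu, -⟩ := (Part.mem_map_iff _).1 ha
      obtain ⟨he, -⟩ := Part.mem_assert_iff.1 hu
      exact he
  rw [h2]
  constructor
  · rintro ⟨a, ha⟩
    obtain ⟨s, hs⟩ := evaln_complete.1 ha
    exact ⟨s, Option.isSome_iff_exists.2 ⟨a, hs⟩⟩
  · rintro ⟨s, hs⟩
    obtain ⟨a, ha⟩ := Option.isSome_iff_exists.1 hs
    exact ⟨a, evaln_sound ha⟩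

def acceptB (cI : Code) (e' s : ℕ) : Bool := (evaln s cI e').isSome

def outO (p w : ℕ) : Option ℕ := evaln w (Denumerable.ofNat Code p) 0

def haltB (cI : Code) (e' p i w : ℕ) : Bool :=
  (decide (i % 2 = 1) &&
    (!(acceptB cI e' (i / 2 + 1)) ||
      ((outO p w).isSome && acceptB cI e' ((outO p w).getD 0 + 2) &&
        decide (i / 2 ≤ (outO p w).getD 0)))) ||
  (decide (i % 2 = 0) && ((outO p w).isSome && acceptB cI e' ((outO p w).getD 0 + 2) &&
      decide (i = 2 * (outO p w).getD 0)))

lemma acceptB_mono {cI : Code} {e' s s' : ℕ} (hss : s ≤ s') (h : acceptB cI e' s = true) :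
    acceptB cI e' s' = true := by
  obtain ⟨a, ha⟩ := Option.isSome_iff_exists.1 h
  exact Option.isSome_iff_exists.2 ⟨a, evaln_mono hss ha⟩

lemma haltB_prim (cI : Code) :
    Primrec fun q : (ℕ × ℕ) × ℕ × ℕ => haltB cI q.1.1 q.1.2 q.2.1 q.2.2 := by
  have band : Primrec₂ (· && · : Bool → Bool → Bool) := Primrec.dom_bool₂ _
  have bor : Primrec₂ (· || · : Bool → Bool → Bool) := Primrec.dom_bool₂ _
  have bnot : Primrec (! · : Bool → Bool) := Primrec.dom_bool _
  set α := (ℕ × ℕ) × ℕ × ℕ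
  have he' : Primrec fun q : α => q.1.1 := Primrec.fst.comp Primrec.fst
  have hp : Primrec fun q : α => q.1.2 := Primrec.snd.comp Primrec.fst
  have hi : Primrec fun q : α => q.2.1 := Primrec.fst.comp Primrec.snd
  have hw : Primrec fun q : α => q.2.2 := Primrec.snd.comp Primrec.snd
  have hout : Primrec fun q : α => outO q.1.2 q.2.2 :=
    primrec_evaln.comp ((hw.pair ((Primrec.ofNat Code).comp hp)).pair (Primrec.const 0))
  have hgetD : Primrec fun q : α => (outO q.1.2 q.2.2).getD 0 :=
    Primrec.option_getD.comp hout (Primrec.const 0)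
  have hacc : ∀ {f : α → ℕ}, Primrec f →
      Primrec fun q : α => acceptB cI q.1.1 (f q) := fun hf =>
    Primrec.option_isSome.comp (primrec_evaln.comp ((hf.pair (Primrec.const cI)).pair he'))
  have hsome : Primrec fun q : α => (outO q.1.2 q.2.2).isSome :=
    Primrec.option_isSome.comp hout
  have hcommit : Primrec fun q : α =>
      ((outO q.1.2 q.2.2).isSome && acceptB cI q.1.1 ((outO q.1.2 q.2.2).getD 0 + 2)) :=
    band.comp hsome (hacc (Primrec.nat_add.comp hgetD (Primrec.const 2)))
  have hmod1 : Primrec fun q : α => decide (q.2.1 % 2 = 1) :=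
    Primrec.eq.decide.comp (Primrec.nat_mod.comp hi (Primrec.const 2)) (Primrec.const 1)
  have hmod0 : Primrec fun q : α => decide (q.2.1 % 2 = 0) :=
    Primrec.eq.decide.comp (Primrec.nat_mod.comp hi (Primrec.const 2)) (Primrec.const 0)
  have hle : Primrec fun q : α => decide (q.2.1 / 2 ≤ (outO q.1.2 q.2.2).getD 0) :=
    Primrec.nat_le.decide.comp (Primrec.nat_div.comp hi (Primrec.const 2)) hgetD
  have heq2 : Primrec fun q : α => decide (q.2.1 = 2 * (outO q.1.2 q.2.2).getD 0) :=
    Primrec.eq.decide.comp hi (Primrec.nat_mul.comp (Primrec.const 2) hgetD)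
  have hnotacc : Primrec fun q : α => (!(acceptB cI q.1.1 (q.2.1 / 2 + 1))) :=
    bnot.comp (hacc (Primrec.nat_add.comp (Primrec.nat_div.comp hi (Primrec.const 2))
      (Primrec.const 1)))
  exact bor.comp
    (band.comp hmod1 (bor.comp hnotacc (band.comp hcommit hle)))
    (band.comp hmod0 (band.comp hcommit heq2))

lemma key {A : Set ℕ∞} (hA : MarkovSemidecN A) (htop : ⊤ ∈ A) :
    ∃ Acc : ℕ → ℕ → Bool, Primrec₂ Acc ∧
      (∀ p s s', s ≤ s' → Acc p s = true → Acc p s' = true) ∧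
      (∀ p, ∃ s, Acc p s = true) ∧
      (∀ p n, phi p 0 = Part.some n → Acc p (n + 2) = true → (n : ℕ∞) ∈ A) := by
  obtain ⟨I, hRe, hname⟩ := hA
  obtain ⟨cI, hcI⟩ := exists_cI hRe
  -- the fixed point machine
  have hinner : Computable₂ fun (q : Code × ℕ) (w : ℕ) =>
      haltB cI (Encodable.encode (curry q.1 q.2.unpair.1)) q.2.unpair.1 q.2.unpair.2 w := by
    apply Primrec₂.to_comp
    have hpack : Primrec fun r : (Code × ℕ) × ℕ =>
        (((Encodable.encode (curry r.1.1 r.1.2.unpair.1), r.1.2.unpair.1),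
          (r.1.2.unpair.2, r.2)) : (ℕ × ℕ) × ℕ × ℕ) := by
      have hc1 : Primrec fun r : (Code × ℕ) × ℕ => r.1.1 := Primrec.fst.comp Primrec.fst
      have hn1 : Primrec fun r : (Code × ℕ) × ℕ => r.1.2.unpair.1 :=
        Primrec.fst.comp (Primrec.unpair.comp (Primrec.snd.comp Primrec.fst))
      have hn2 : Primrec fun r : (Code × ℕ) × ℕ => r.1.2.unpair.2 :=
        Primrec.snd.comp (Primrec.unpair.comp (Primrec.snd.comp Primrec.fst))
      exact ((Primrec.encode.comp (primrec₂_curry.comp hc1 hn1)).pair hn1).pair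
        (hn2.pair Primrec.snd)
    exact (haltB_prim cI).comp hpack
  have hF : Partrec₂ fun (c : Code) (x : ℕ) =>
      (Nat.rfind fun w => Part.some (haltB cI (Encodable.encode (curry c x.unpair.1))
        x.unpair.1 x.unpair.2 w)).map fun _ => (0 : ℕ) :=
    (Partrec.rfind hinner.partrec₂).map ((Computable.const 0).comp Computable.fst).to₂
  obtain ⟨c, hc⟩ := fixed_point₂ hF
  set ep : ℕ → ℕ := fun p => Encodable.encode (curry c p) with hep
  have hWp : ∀ p i, i ∈ W (ep p) ↔ ∃ w, haltB cI (ep p) p i w = true := by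
    intro p i
    have h1 : phi (ep p) i = c.eval (Nat.pair p i) := by
      show (Denumerable.ofNat Code (Encodable.encode (curry c p))).eval i = _
      rw [Denumerable.ofNat_encode, eval_curry]
    have h2 : i ∈ W (ep p) ↔ ∃ a, a ∈ phi (ep p) i := by simp [W, Part.dom_iff_mem]
    rw [h2]
    rw [h1, hc]
    constructor
    · rintro ⟨a, ha⟩
      obtain ⟨u, hu, -⟩ := (Part.mem_map_iff _).1 ha
      have := Nat.rfind_spec hu
      simp only [Part.mem_some_iff] at this
      refine ⟨u, ?_⟩
      simpa [Nat.unpair_pair] using this.symm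
    · rintro ⟨w, hw⟩
      have hdom : (Nat.rfind fun w' => Part.some (haltB cI
          (Encodable.encode (curry c (Nat.pair p i).unpair.1)) (Nat.pair p i).unpair.1
          (Nat.pair p i).unpair.2 w')).Dom := by
        apply Nat.rfind_dom.2
        refine ⟨w, ?_, fun {m} _ => trivial⟩
        simp only [Nat.unpair_pair, Part.mem_some_iff]
        exact hw.symm
      exact ⟨0, Part.mem_map _ (Part.get_mem hdom)⟩
  refine ⟨fun p s => acceptB cI (ep p) s, ?_, ?_, ?_, ?_⟩
  · -- primrec
    have hepp : Primrec ep := Primrec.encode.comp (primrec₂_curry.comp (Primrec.const c) Primrec.id)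
    exact (Primrec.option_isSome.comp
      (primrec_evaln.comp ((Primrec.snd.pair (Primrec.const cI)).pair (hepp.comp Primrec.fst)))).to₂
  · exact fun p s s' hss h => acceptB_mono hss h
  · -- every p is eventually accepted
    intro p
    by_contra hno
    push_neg at hno
    have hno' : ∀ s, acceptB cI (ep p) s = false := by
      intro s
      have := hno s
      simpa [Bool.not_eq_true] using this
    have hnameTop : isName (ep p) ⊤ := by
      apply Set.ext
      intro i
      rw [hWp, mem_nbhdCodes_top]
      constructor
      · rintro ⟨w, hw⟩
        simp [haltB, hno'] at hw
        exact ⟨i / 2, by omega⟩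
      · rintro ⟨m, rfl⟩
        refine ⟨0, ?_⟩
        simp [haltB, hno', Nat.mul_add_mod]
    have h1 : (⊤ : ℕ∞) ∈ A ↔ ep p ∈ I := hname _ _ hnameTop
    obtain ⟨s, hs⟩ := (hcI _).1 (h1.1 htop)
    have hfs := hno' s
    unfold acceptB at hfs
    rw [hfs] at hs
    exact Bool.noConfusion hs
  · -- commit case
    intro p n hp hacc
    have hval : ∀ w a, a ∈ outO p w → a = n := by
      intro w a ha
      have : a ∈ phi p 0 := evaln_sound ha
      rw [hp] at this
      exact Part.mem_some_iff.1 this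
    obtain ⟨w0, hw0⟩ := evaln_complete.1 (show n ∈ phi p 0 by rw [hp]; exact Part.mem_some n)
    have hw0' : outO p w0 = some n := hw0
    have hnamen : isName (ep p) (n : ℕ∞) := by
      apply Set.ext
      intro i
      rw [hWp]
      constructor
      · rintro ⟨w, hw⟩
        simp only [haltB, Bool.or_eq_true, Bool.and_eq_true, Bool.not_eq_true',
          decide_eq_true_eq] at hw
        rcases hw with ⟨hodd, hdisj⟩ | ⟨heven, ⟨⟨hsome, -⟩, heq⟩⟩
        · -- odd case
          have hile : i / 2 ≤ n := by
            rcases hdisj with hnot | ⟨⟨hsome, -⟩, hle⟩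
            · by_contra hgt
              push_neg at hgt
              have : acceptB cI (ep p) (i / 2 + 1) = true :=
                acceptB_mono (by omega) hacc
              rw [this] at hnot
              exact absurd hnot (by simp)
            · obtain ⟨a, ha⟩ := Option.isSome_iff_exists.1 hsome
              have han : a = n := hval _ _ ha
              rw [ha] at hle
              simpa [han] using hle
          have h2 : i = 2 * (i / 2) + 1 := by omega
          rw [h2]
          exact odd_mem_nbhdCodes.2 (Nat.cast_le.2 hile)
        · obtain ⟨a, ha⟩ := Option.isSome_iff_exists.1 hsome
          have han : a = n := hval _ _ ha
          rw [ha] at heq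
          simp only [Option.getD_some, han] at heq
          rw [heq]
          exact even_mem_nbhdCodes.2 rfl
      · intro hi
        rcases (show i = 2 * n ∨ ∃ m ≤ n, i = 2 * m + 1 from mem_nbhdCodes_coe.1 hi) with
          rfl | ⟨m, hm, rfl⟩
        · refine ⟨w0, ?_⟩
          simp [haltB, hw0', Nat.mul_mod_right, hacc]
        · refine ⟨w0, ?_⟩
          have : (2 * m + 1) % 2 = 1 := by omega
          have hdiv : (2 * m + 1) / 2 = m := by omega
          simp [haltB, hw0', this, hdiv, hacc, hm]
    have h1 : (n : ℕ∞) ∈ A ↔ ep p ∈ I := hname _ _ hnamen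
    exact h1.2 ((hcI _).2 ⟨n + 2, hacc⟩)



lemma computable_nat_find {p : ℕ → ℕ → Prop} [I0 : ∀ a n, Decidable (p a n)]
    (hp : Computable₂ fun a n => decide (p a n)) (hex : ∀ a, ∃ n, p a n) :
    Computable fun a => Nat.find (hex a) := by
  have h1 : Partrec fun a => Nat.rfind fun n => Part.some (decide (p a n)) :=
    Partrec.rfind hp.partrec₂
  have h2 : ∀ a, (Nat.rfind fun n => Part.some (decide (p a n)))
      = Part.some (Nat.find (hex a)) := by
    intro a
    apply Part.eq_some_iff.2
    apply Nat.mem_rfind.2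
    constructor
    · simp [Part.mem_some_iff, Nat.find_spec (hex a)]
    · intro m hm
      simp [Part.mem_some_iff, Nat.find_min (hex a) hm]
  exact (h1.of_eq h2 : Computable _)

lemma fried_subset {A : Set ℕ∞} (hA : MarkovSemidecN A) (htop : ⊤ ∈ A) :
    ∃ h : ℕ → ℕ, ComputableOrder h ∧ FriedSet h ⊆ A := by
  obtain ⟨Acc, hAcc, hmonoAcc, hex, hkey⟩ := key hA htop
  classical
  set bAll : ℕ → ℕ → Bool := fun N s => Nat.rec true (fun p ih => ih && Acc p s) N with hbAll
  have bAll_iff : ∀ N s, bAll N s = true ↔ ∀ p < N, Acc p s = true := by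
    intro N s
    induction N with
    | zero => simp [hbAll]
    | succ N ih =>
      have hstep : bAll (N + 1) s = (bAll N s && Acc N s) := rfl
      rw [hstep, Bool.and_eq_true, ih]
      constructor
      · rintro ⟨h1, h2⟩ q hq
        rcases Nat.lt_succ_iff_lt_or_eq.1 hq with hlt | rfl
        exacts [h1 q hlt, h2]
      · intro hall
        exact ⟨fun q hq => hall q (hq.trans (Nat.lt_succ_self N)),
          hall N (Nat.lt_succ_self N)⟩
  have hbAllPrim : Primrec fun q : ℕ × ℕ => bAll (2 ^ q.1) q.2 := by
    have hf : Primrec fun q : ℕ × ℕ => 2 ^ q.1 :=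
      (Primrec₂.unpaired'.1 Nat.Primrec.pow).comp (Primrec.const 2) Primrec.fst
    have hh : Primrec₂ fun (q : ℕ × ℕ) (z : ℕ × Bool) => (z.2 && Acc z.1 q.2) := by
      have band : Primrec₂ (· && · : Bool → Bool → Bool) := Primrec.dom_bool₂ _
      exact band.comp (Primrec.snd.comp Primrec.snd)
        (hAcc.comp (Primrec.fst.comp Primrec.snd) (Primrec.snd.comp Primrec.fst))
    exact Primrec.nat_rec' hf (Primrec.const true) hh
  have hexT : ∀ k, ∃ s, bAll (2 ^ k) s = true := by
    intro k
    suffices hN : ∀ N, ∃ s, ∀ p < N, Acc p s = true by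
      obtain ⟨s, hs⟩ := hN (2 ^ k)
      exact ⟨s, (bAll_iff _ _).2 hs⟩
    intro N
    induction N with
    | zero => exact ⟨0, by omega⟩
    | succ N ih =>
      obtain ⟨s, hs⟩ := ih
      obtain ⟨s', hs'⟩ := hex N
      refine ⟨max s s', fun p hp => ?_⟩
      rcases Nat.lt_succ_iff_lt_or_eq.1 hp with hlt | rfl
      · exact hmonoAcc _ _ _ (le_max_left _ _) (hs p hlt)
      · exact hmonoAcc _ _ _ (le_max_right _ _) hs'
  set T : ℕ → ℕ := fun k => Nat.find (hexT k) with hTdef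
  have hTspec : ∀ k p, p < 2 ^ k → Acc p (T k) = true := fun k p hp =>
    (bAll_iff _ _).1 (Nat.find_spec (hexT k)) p hp
  have hTmono : Monotone T := by
    intro k k' hkk
    apply Nat.find_mono
    intro s hs
    rw [bAll_iff] at hs ⊢
    exact fun p hp => hs p (lt_of_lt_of_le hp (Nat.pow_le_pow_right (by norm_num) hkk))
  have hTcomp : Computable T := by
    apply computable_nat_find ?_ hexT
    exact Primrec₂.to_comp
      ((hbAllPrim.of_eq (fun q => by simp)) :
        Primrec fun q : ℕ × ℕ => decide (bAll (2 ^ q.1) q.2 = true))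
  have hexh : ∀ n, ∃ k, n < k + T k := fun n =>
    ⟨n + 1, by have := Nat.zero_le (T (n + 1)); omega⟩
  set h : ℕ → ℕ := fun n => Nat.find (hexh n) with hhdef
  have hcomp : Computable h := by
    apply computable_nat_find ?_ hexh
    exact (Primrec.nat_lt.decide.to_comp.comp Computable.fst
      (Primrec.nat_add.to_comp.comp Computable.snd (hTcomp.comp Computable.snd))).to₂
  have hmono : Monotone h := by
    intro n n' hnn
    exact Nat.find_mono fun k hk => lt_of_le_of_lt hnn hk
  refine ⟨h, ⟨hcomp, hmono, ?_⟩, ?_⟩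
  · intro m
    refine ⟨m + T m, ?_⟩
    rw [hhdef]
    rw [Nat.le_find_iff]
    intro k hk
    have : T k ≤ T m := hTmono (le_of_lt hk)
    omega
  · rintro x (rfl | ⟨n, rfl, hK⟩)
    · exact htop
    · obtain ⟨p, hp, hps⟩ := exists_of_Knat_lt hK
      have h1 : ¬ (n < Nat.size p + T (Nat.size p)) := Nat.find_min (hexh n) hps
      have h3 : Acc p (T (Nat.size p)) = true := hTspec _ _ (Nat.lt_size_self p)
      exact hkey p n hp (hmonoAcc _ _ _ (by omega) h3)


/-- On `N̄`, the Ershov topology (generated by the Markov-semidecidable sets) is generated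
by the singletons `{n}` together with the Friedberg sets. -/
theorem stmt10 :
    TopologicalSpace.generateFrom {A : Set ℕ∞ | MarkovSemidecN A} =
    TopologicalSpace.generateFrom
      ({S | ∃ n : ℕ, S = {(n : ℕ∞)}} ∪
        {S | ∃ h : ℕ → ℕ, ComputableOrder h ∧ S = FriedSet h}) := by
  apply le_antisymm
  · rw [TopologicalSpace.le_generateFrom_iff_subset_isOpen]
    rintro S (⟨n, rfl⟩ | ⟨f, hf, rfl⟩)
    · exact TopologicalSpace.GenerateOpen.basic _ (markov_singleton n)
    · exact TopologicalSpace.GenerateOpen.basic _ (markov_friedSet hf)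
  · rw [TopologicalSpace.le_generateFrom_iff_subset_isOpen]
    rintro A hA
    show TopologicalSpace.GenerateOpen _ A
    by_cases htop : (⊤ : ℕ∞) ∈ A
    · obtain ⟨f, hford, hsub⟩ := fried_subset hA htop
      have hAeq : A = ⋃₀ ({FriedSet f} ∪ {S | ∃ n : ℕ, (n : ℕ∞) ∈ A ∧ S = {(n : ℕ∞)}}) := by
        ext x
        constructor
        · intro hx
          induction x using ENat.recTopCoe with
          | top => exact ⟨FriedSet f, Or.inl rfl, Or.inl rfl⟩
          | coe n => exact ⟨{(n : ℕ∞)}, Or.inr ⟨n, hx, rfl⟩, rfl⟩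
        · rintro ⟨S, hS | ⟨n, hn, rfl⟩, hxS⟩
          · rw [Set.mem_singleton_iff] at hS
            subst hS
            exact hsub hxS
          · rw [Set.mem_singleton_iff] at hxS
            subst hxS
            exact hn
      rw [hAeq]
      apply TopologicalSpace.GenerateOpen.sUnion
      rintro S (hS | ⟨n, hn, rfl⟩)
      · rw [Set.mem_singleton_iff] at hS
        subst hS
        exact TopologicalSpace.GenerateOpen.basic _ (Or.inr ⟨f, hford, rfl⟩)
      · exact TopologicalSpace.GenerateOpen.basic _ (Or.inl ⟨n, rfl⟩)
    · have hAeq : A = ⋃₀ ({S | ∃ n : ℕ, (n : ℕ∞) ∈ A ∧ S = {(n : ℕ∞)}} : Set (Set ℕ∞)) := by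
        ext x
        constructor
        · intro hx
          induction x using ENat.recTopCoe with
          | top => exact absurd hx htop
          | coe n => exact ⟨{(n : ℕ∞)}, ⟨n, hx, rfl⟩, rfl⟩
        · rintro ⟨S, ⟨n, hn, rfl⟩, hxS⟩
          rw [Set.mem_singleton_iff] at hxS
          subst hxS
          exact hn
      rw [hAeq]
      apply TopologicalSpace.GenerateOpen.sUnion
      rintro S ⟨n, hn, rfl⟩
      exact TopologicalSpace.GenerateOpen.basic _ (Or.inl ⟨n, rfl⟩)
end

section
/- The singleton {⊥} ⊆ 𝕊 (Sierpiński space) is Markov-decidable relative to the halting set ∅′, but is not Type-2-decidable relative to any oracle. -/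
/-- The halting set `∅′`. -/
def halts : Set ℕ := {e | (phi e e).Dom}

/-- Characteristic function of a set of naturals. -/
noncomputable def chi (S : Set ℕ) : ℕ → Bool :=
  fun n => @decide (n ∈ S) (Classical.propDecidable _)

/-- The admissible numbering of Sierpiński space `𝕊 = {⊥,⊤}` (with `⊥ = false`, `⊤ = true`):
`ν_𝕊(e) = ⊤` iff `φ_e(e)↓`. -/
noncomputable def nuS (e : ℕ) : Bool := @decide ((phi e e).Dom) (Classical.propDecidable _)

/-- `f` is a Type-2 name of the point `s ∈ 𝕊`: `s = ⊤` iff `f` eventually shows a nonzero. -/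
def SierpName (f : ℕ → ℕ) (s : Bool) : Prop := (s = true ↔ ∃ n, f n ≠ 0)

/-- The singleton `{⊥} ⊆ 𝕊` is Markov-decidable relative to the halting set (an oracle
machine with oracle `∅′`, given any index `e`, outputs whether `ν_𝕊(e) = ⊥`), but it is not
Type-2-decidable relative to any oracle (no monotone — not even computable — functional on
names decides it, since `{⊥}` is not clopen). -/
theorem stmt12 :
    (∃ M : ℕ → List Bool → Option Bool, Computable₂ M ∧
      (∀ e l l' b, M e l = some b → M e (l ++ l') = some b) ∧
      ∀ e, ∃ m, M e (prefB (chi halts) m) = some (!nuS e)) ∧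
    (¬ ∃ M : List ℕ → Option Bool,
      (∀ l l' b, M l = some b → M (l ++ l') = some b) ∧
      ∀ (s : Bool) (f : ℕ → ℕ), SierpName f s →
        (∃ m, M (pref f m) = some (!s)) ∧ (∀ m b, M (pref f m) = some b → b = !s)) := by
  constructor
  · refine ⟨fun e l => (l[e]?).map (fun b => !b), ?_, ?_, ?_⟩
    · exact (Primrec.option_map
        (Primrec.list_getElem?.comp Primrec.snd Primrec.fst)
        (Primrec.not.comp Primrec.snd).to₂).to_comp.to₂
    · intro e l l' b h
      rcases Option.map_eq_some_iff.1 h with ⟨x, hx, hb⟩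
      have hlen : e < l.length := List.getElem?_eq_some_iff.1 hx |>.1
      have : (l ++ l')[e]? = some x := by
        rw [List.getElem?_append_left hlen]; exact hx
      simp [this, hb]
    · intro e
      refine ⟨e + 1, ?_⟩
      have h1 : (prefB (chi halts) (e + 1))[e]? = some (chi halts e) := by
        simp [prefB]
      have h2 : chi halts e = nuS e := by
        unfold chi nuS halts
        exact decide_eq_decide.2 Iff.rfl
      simp [h1, h2]
  · rintro ⟨M, hmono, hdec⟩
    have hf : SierpName (fun _ => 0) false := by simp [SierpName]
    obtain ⟨⟨m, hm⟩, -⟩ := hdec false (fun _ => 0) hf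
    set g : ℕ → ℕ := fun n => if n < m then 0 else 1 with hg
    have hgname : SierpName g true := by
      constructor
      · intro _; exact ⟨m, by simp [hg]⟩
      · intro _; rfl
    have hpref : pref (fun _ => 0) m = pref g m := by
      unfold pref
      refine List.map_congr_left ?_
      intro n hn
      simp [hg, List.mem_range.1 hn]
    obtain ⟨-, huniq⟩ := hdec true g hgname
    have := huniq m true (by rw [← hpref]; simpa using hm)
    simp at this
end
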